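/- arXiv:1706.07334 — 2 statements merged into one kernel-verified Lean document; each statement's English description precedes it below -/
import Mathlib

section
/- Fix integers ℓ, n ≥ 1, a field k, and an n×n matrix q = (q_{i,j}) over k with q_{i,i} = 1, q_{i,j} = q_{j,i}^{-1} for i ≠ j, and q_{i,j}^ℓ = 1 for all i,j. Let A = k_q[x_1,…,x_n] be the quantum affine space, i.e. the quotient of the free associative k-algebra on x_1,…,x_n by the two-sided ideal generated by the elements x_i x_j − q_{i,j} x_j x_i, and let Z_0 ⊆ A be the unital subalgebra generated by x_1^ℓ,…,x_n^ℓ. Then: (1) A is a free Z_0-module of rank ℓ^n with basis the restricted monomials {x_1^{a_1}⋯x_n^{a_n} : 0 ≤ a_i < ℓ}; (2) the Z_0-linear projection Φ of A onto the summand Z_0·x_1^{ℓ-1}⋯x_n^{ℓ-1} (relative to this basis) is a Frobenius form, so Z_0 ⊆ A is a free Frobenius extension of rank ℓ^n; and (3) for any abelian group G and any d_1,…,d_n ∈ G, endowing A with the G-grading in which x_i has degree d_i makes Z_0 ⊆ A a free-graded Frobenius extension with homogeneous Frobenius form Φ of degree −∑_{i=1}^n (ℓ−1)d_i. -/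
/-!
STATEMENT 5: For `ℓ, n ≥ 1` and a multiplicatively antisymmetric matrix `q` with
`q_{i,j}^ℓ = 1`, the quantum affine space `A = k_q[x₁,…,x_n]` is a free module of
rank `ℓⁿ` over the `ℓ`-centre `Z₀ = k⟨x₁^ℓ,…,x_n^ℓ⟩`, with basis the restricted
monomials; the projection `Φ` onto the summand `Z₀·x₁^{ℓ-1}⋯x_n^{ℓ-1}` is a Frobenius
form; and for any abelian group `G` and degrees `d₁,…,d_n ∈ G`, the induced grading
makes `Z₀ ⊆ A` a free-graded Frobenius extension with homogeneous Frobenius form `Φ`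
of degree `−Σ (ℓ−1)dᵢ`.
-/

noncomputable section

variable (k : Type*) [Field k] (n ℓ : ℕ) (q : Fin n → Fin n → k)

/-- The defining relations of quantum affine space: `xᵢxⱼ = q_{ij} xⱼxᵢ`. -/
def QASRel : FreeAlgebra k (Fin n) → FreeAlgebra k (Fin n) → Prop := fun a b =>
  ∃ i j : Fin n, a = FreeAlgebra.ι k i * FreeAlgebra.ι k j ∧
    b = q i j • (FreeAlgebra.ι k j * FreeAlgebra.ι k i)

/-- Quantum affine space `k_q[x₁,…,x_n]`. -/
def QAS := RingQuot (QASRel k n q)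

instance : Ring (QAS k n q) := by unfold QAS; infer_instance

instance : Algebra k (QAS k n q) := by unfold QAS; infer_instance

/-- The generators `x₁,…,x_n` of quantum affine space. -/
def qasX (i : Fin n) : QAS k n q :=
  RingQuot.mkAlgHom k (QASRel k n q) (FreeAlgebra.ι k i)

/-- The ordered monomial `x₁^{a₁} ⋯ x_n^{a_n}`. -/
def qasMonomial (a : Fin n → ℕ) : QAS k n q :=
  ((List.finRange n).map fun i => qasX k n q i ^ a i).prod

/-- The `ℓ`-centre `Z₀ ⊆ A`, generated by `x₁^ℓ, …, x_n^ℓ`. -/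
def qasCentre : Subalgebra k (QAS k n q) :=
  Algebra.adjoin k (Set.range fun i : Fin n => qasX k n q i ^ ℓ)

/-- Frobenius form for the extension `S ⊆ R`. -/
def IsFrobeniusForm {k R : Type*} [Field k] [Ring R] [Algebra k R]
    (S : Subalgebra k R) (Φ : R →ₗ[S] S) : Prop :=
  (∀ I : Ideal R, (∀ x ∈ I, Φ x = 0) → I = ⊥) ∧
  (∀ I : Submodule Rᵐᵒᵖ R, (∀ x ∈ I, Φ x = 0) → I = ⊥) ∧
  (∀ f : R →ₗ[S] S, ∃ r : R, ∀ q : R, f q = Φ (r * q))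

/-- The grading of quantum affine space by an abelian group `G` in which `xᵢ` has
degree `dᵢ`: the piece of degree `g` is spanned by the monomials of degree `g`. -/
def qasGrading {G : Type*} [CommGroup G] (d : Fin n → G) (g : G) :
    Submodule k (QAS k n q) :=
  Submodule.span k
    {m | ∃ a : Fin n → ℕ, m = qasMonomial k n q a ∧ (∏ i, d i ^ a i) = g}

section QASInstSec

attribute [local irreducible] instRingQAS instAlgebraQAS

namespace QASAux

variable {k : Type*} [Field k] {n ℓ : ℕ} (q : Fin n → Fin n → k)

theorem qasX_comm (i j : Fin n) :
    qasX k n q i * qasX k n q j = q i j • (qasX k n q j * qasX k n q i) := by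
  have h := RingQuot.mkAlgHom_rel k (s := QASRel k n q) ⟨i, j, rfl, rfl⟩
  rw [map_mul, map_smul, map_mul] at h
  with_unfolding_all exact h

/-- The 2-cocycle `c(a,b) = ∏_{i>j} q i j ^ (a i * b j)`. -/
def ccoef (a b : Fin n → ℕ) : k :=
  ∏ i, ∏ j, if j < i then q i j ^ (a i * b j) else 1

theorem ccoef_add_left (a a' b : Fin n → ℕ) :
    ccoef q (a + a') b = ccoef q a b * ccoef q a' b := by
  unfold ccoef
  rw [← Finset.prod_mul_distrib]
  refine Finset.prod_congr rfl fun i _ => ?_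
  rw [← Finset.prod_mul_distrib]
  refine Finset.prod_congr rfl fun j _ => ?_
  split_ifs with h
  · rw [Pi.add_apply, add_mul, pow_add]
  · rw [mul_one]

theorem ccoef_add_right (a b b' : Fin n → ℕ) :
    ccoef q a (b + b') = ccoef q a b * ccoef q a b' := by
  unfold ccoef
  rw [← Finset.prod_mul_distrib]
  refine Finset.prod_congr rfl fun i _ => ?_
  rw [← Finset.prod_mul_distrib]
  refine Finset.prod_congr rfl fun j _ => ?_
  split_ifs with h
  · rw [Pi.add_apply, mul_add, pow_add]
  · rw [mul_one]

theorem ccoef_zero_left (b : Fin n → ℕ) : ccoef q 0 b = 1 := by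
  unfold ccoef
  refine Finset.prod_eq_one fun i _ => Finset.prod_eq_one fun j _ => ?_
  split_ifs <;> simp

theorem ccoef_zero_right (a : Fin n → ℕ) : ccoef q a 0 = 1 := by
  unfold ccoef
  refine Finset.prod_eq_one fun i _ => Finset.prod_eq_one fun j _ => ?_
  split_ifs <;> simp

theorem ccoef_single_right (a : Fin n → ℕ) (j : Fin n) (t : ℕ) :
    ccoef q a (Pi.single j t) = ∏ i, if j < i then q i j ^ (a i * t) else 1 := by
  unfold ccoef
  refine Finset.prod_congr rfl fun i _ => ?_
  rw [Finset.prod_eq_single j]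
  · simp
  · intro j' _ hj'
    rw [Pi.single_eq_of_ne hj']
    split_ifs <;> simp
  · simp

theorem ccoef_single_left (a : Fin n → ℕ) (i : Fin n) (t : ℕ) :
    ccoef q (Pi.single i t) a = ∏ j, if j < i then q i j ^ (t * a j) else 1 := by
  unfold ccoef
  rw [Finset.prod_eq_single i]
  · refine Finset.prod_congr rfl fun j _ => ?_
    split_ifs <;> simp
  · intro i' _ hi'
    refine Finset.prod_eq_one fun j _ => ?_
    rw [Pi.single_eq_of_ne hi']
    split_ifs <;> simp
  · simp

theorem ccoef_single_single_of_le {j j' : Fin n} (h : ¬ j' < j) (t t' : ℕ) :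
    ccoef q (Pi.single j t) (Pi.single j' t') = 1 := by
  rw [ccoef_single_left]
  refine Finset.prod_eq_one fun m _ => ?_
  split_ifs with hm
  · rw [Pi.single_eq_of_ne (by rintro rfl; exact h hm)]
    simp
  · rfl

theorem ccoef_smul_left (hq3 : ∀ i j, q i j ^ ℓ = 1) (m b : Fin n → ℕ) :
    ccoef q (ℓ • m) b = 1 := by
  unfold ccoef
  refine Finset.prod_eq_one fun i _ => Finset.prod_eq_one fun j _ => ?_
  split_ifs with h
  · rw [Pi.smul_apply, smul_eq_mul, mul_assoc, pow_mul, hq3]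
    exact one_pow _
  · rfl

theorem ccoef_smul_right (hq3 : ∀ i j, q i j ^ ℓ = 1) (a m : Fin n → ℕ) :
    ccoef q a (ℓ • m) = 1 := by
  unfold ccoef
  refine Finset.prod_eq_one fun i _ => Finset.prod_eq_one fun j _ => ?_
  split_ifs with h
  · rw [Pi.smul_apply, smul_eq_mul, mul_left_comm, pow_mul, hq3]
    exact one_pow _
  · rfl

theorem q_ne_zero (hq1 : ∀ i, q i i = 1) (hq2 : ∀ i j, i ≠ j → q i j * q j i = 1)
    (i j : Fin n) : q i j ≠ 0 := by
  rcases eq_or_ne i j with rfl | h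
  · rw [hq1]; exact one_ne_zero
  · exact left_ne_zero_of_mul_eq_one (hq2 i j h)

theorem ccoef_ne_zero (hq1 : ∀ i, q i i = 1) (hq2 : ∀ i j, i ≠ j → q i j * q j i = 1)
    (a b : Fin n → ℕ) : ccoef q a b ≠ 0 := by
  unfold ccoef
  rw [Finset.prod_ne_zero_iff]
  intro i _
  rw [Finset.prod_ne_zero_iff]
  intro j _
  split_ifs
  · exact pow_ne_zero _ (q_ne_zero q hq1 hq2 i j)
  · exact one_ne_zero

end QASAux
namespace QASAux2
open QASAux

variable {k : Type*} [Field k] {n ℓ : ℕ} (q : Fin n → Fin n → k)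

theorem X_pow_comm (i j : Fin n) (a : ℕ) :
    qasX k n q i ^ a * qasX k n q j = (q i j ^ a) • (qasX k n q j * qasX k n q i ^ a) := by
  induction a with
  | zero => simp
  | succ a ih =>
    rw [pow_succ, mul_assoc, qasX_comm q i j, mul_smul_comm, ← mul_assoc, ih,
      smul_mul_assoc, smul_smul, mul_assoc, ← pow_succ, ← pow_succ']

theorem list_prod_mul_X (L : List (Fin n)) (j : Fin n) (a : Fin n → ℕ) :
    (L.map fun i => qasX k n q i ^ a i).prod * qasX k n q j
      = ((L.map fun i => q i j ^ a i).prod : k) •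
        (qasX k n q j * (L.map fun i => qasX k n q i ^ a i).prod) := by
  induction L with
  | nil => simp
  | cons i₀ L ih =>
    simp only [List.map_cons, List.prod_cons]
    rw [mul_assoc, ih, mul_smul_comm, ← mul_assoc, X_pow_comm q i₀ j, smul_mul_assoc,
      smul_smul, mul_assoc, mul_comm]

theorem sorted_prod_mul_X (L : List (Fin n)) (hL : L.Pairwise (· < ·)) (j : Fin n)
    (hj : j ∈ L) (a : Fin n → ℕ) :
    (L.map fun i => qasX k n q i ^ a i).prod * qasX k n q j
      = ((L.map fun i => if j < i then q i j ^ a i else 1).prod : k) •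
        (L.map fun i => qasX k n q i ^ (a i + (Pi.single j 1 : Fin n → ℕ) i)).prod := by
  induction L with
  | nil => simp at hj
  | cons i₀ L ih =>
    rw [List.pairwise_cons] at hL
    obtain ⟨hlt, hL'⟩ := hL
    simp only [List.map_cons, List.prod_cons]
    rcases List.mem_cons.mp hj with rfl | hj'
    · -- j = i₀
      rw [mul_assoc, list_prod_mul_X, mul_smul_comm, ← mul_assoc, ← pow_succ]
      have h1 : (L.map fun i => q i j ^ a i).prod
          = (L.map fun i => if j < i then q i j ^ a i else 1).prod := by
        refine congrArg List.prod (List.map_congr_left fun i hi => ?_)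
        rw [if_pos (hlt i hi)]
      have h2 : (L.map fun i => qasX k n q i ^ a i).prod
          = (L.map fun i => qasX k n q i ^ (a i + (Pi.single j 1 : Fin n → ℕ) i)).prod := by
        refine congrArg List.prod (List.map_congr_left fun i hi => ?_)
        have : i ≠ j := fun h => absurd (h ▸ hlt i hi) (lt_irrefl _)
        rw [Pi.single_eq_of_ne this, add_zero]
      rw [h1, h2, if_neg (lt_irrefl j), one_mul, Pi.single_eq_same]
    · -- j ∈ L
      rw [mul_assoc, ih hL' hj', mul_smul_comm,
        Pi.single_eq_of_ne (fun h : i₀ = j => absurd (h ▸ hlt j hj') (lt_irrefl _)), add_zero,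
        if_neg (fun h => absurd (lt_trans h (hlt j hj')) (lt_irrefl _)), one_mul]

theorem qasMonomial_mul_X (a : Fin n → ℕ) (j : Fin n) :
    qasMonomial k n q a * qasX k n q j
      = ccoef q a (Pi.single j 1) • qasMonomial k n q (a + Pi.single j 1) := by
  have := sorted_prod_mul_X q (List.finRange n)
    ((List.pairwise_lt_finRange n)) j (List.mem_finRange j) a
  rw [qasMonomial, qasMonomial, this, ccoef_single_right]
  have h3 : (fun i => qasX k n q i ^ (a i + (Pi.single j 1 : Fin n → ℕ) i))
      = fun i => qasX k n q i ^ ((a + Pi.single j 1 : Fin n → ℕ)) i := rfl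
  rw [h3]
  congr 1
  rw [Fin.prod_univ_def]
  refine congrArg List.prod (List.map_congr_left fun i _ => ?_)
  rw [mul_one]

theorem qasMonomial_mul_X_pow (a : Fin n → ℕ) (j : Fin n) (t : ℕ) :
    qasMonomial k n q a * qasX k n q j ^ t
      = ccoef q a (Pi.single j t) • qasMonomial k n q (a + Pi.single j t) := by
  induction t with
  | zero =>
    simp only [pow_zero, mul_one]
    rw [show Pi.single j 0 = (0 : Fin n → ℕ) from Pi.single_zero j, ccoef_zero_right,
      add_zero, one_smul]
  | succ t ih =>
    rw [pow_succ, ← mul_assoc, ih, smul_mul_assoc, qasMonomial_mul_X, smul_smul,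
      ccoef_add_left, ccoef_single_single_of_le q (lt_irrefl j) t 1, mul_one,
      ← ccoef_add_right, add_assoc, ← Pi.single_add]

theorem prod_absorb (L : List (Fin n)) (hL : L.Pairwise (· < ·)) (a b : Fin n → ℕ)
    (hb : ∀ i, b i ≠ 0 → i ∈ L) :
    qasMonomial k n q a * (L.map fun j => qasX k n q j ^ b j).prod
      = ccoef q a b • qasMonomial k n q (a + b) := by
  induction L generalizing a b with
  | nil =>
    have hb0 : b = 0 := funext fun i => by
      by_contra h; exact absurd (hb i h) List.not_mem_nil
    subst hb0
    simp [ccoef_zero_right]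
  | cons j₀ L ih =>
    rw [List.pairwise_cons] at hL
    obtain ⟨hlt, hL'⟩ := hL
    simp only [List.map_cons, List.prod_cons]
    set b' : Fin n → ℕ := Function.update b j₀ 0 with hb'
    have hrest : (L.map fun j => qasX k n q j ^ b j).prod
        = (L.map fun j => qasX k n q j ^ b' j).prod := by
      refine congrArg List.prod (List.map_congr_left fun i hi => ?_)
      rw [hb', Function.update_of_ne (fun h => absurd (h ▸ hlt i hi) (lt_irrefl _))]
    have hb'supp : ∀ i, b' i ≠ 0 → i ∈ L := by
      intro i hi
      have hij : i ≠ j₀ := by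
        rintro rfl; exact hi (Function.update_self _ _ _)
      have : b i ≠ 0 := by rwa [hb', Function.update_of_ne hij] at hi
      rcases List.mem_cons.mp (hb i this) with h | h
      · exact absurd h hij
      · exact h
    have hsplit : Pi.single j₀ (b j₀) + b' = b := by
      funext i
      rcases eq_or_ne i j₀ with rfl | hij
      · rw [Pi.add_apply, Pi.single_eq_same, hb', Function.update_self, add_zero]
      · rw [Pi.add_apply, Pi.single_eq_of_ne hij, hb', Function.update_of_ne hij, zero_add]
    rw [← mul_assoc, qasMonomial_mul_X_pow, smul_mul_assoc, hrest, ih hL' _ _ hb'supp,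
      smul_smul]
    have hc : ccoef q (Pi.single j₀ (b j₀)) b' = 1 := by
      rw [ccoef_single_left]
      refine Finset.prod_eq_one fun m _ => ?_
      split_ifs with hm
      · have : b' m = 0 := by
          by_contra h
          exact absurd (lt_trans hm (hlt m (hb'supp m h))) (lt_irrefl _)
        rw [this, mul_zero, pow_zero]
      · rfl
    rw [ccoef_add_left, hc, mul_one, ← ccoef_add_right, hsplit, add_assoc,
      show Pi.single j₀ (b j₀) + b' = b from hsplit]

theorem qasMonomial_mul (a b : Fin n → ℕ) :
    qasMonomial k n q a * qasMonomial k n q b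
      = ccoef q a b • qasMonomial k n q (a + b) := by
  exact prod_absorb q (List.finRange n) (List.pairwise_lt_finRange n) a b
    (fun i _ => List.mem_finRange i)

end QASAux2
namespace QASAux3
open QASAux QASAux2

variable {k : Type*} [Field k] {n ℓ : ℕ} (q : Fin n → Fin n → k)

/-- coefficient for the standard representation -/
def Dcoef (i : Fin n) (a : Fin n → ℕ) : k := ∏ m, if m < i then q i m ^ a m else 1

theorem Dcoef_add (i : Fin n) (a b : Fin n → ℕ) :
    Dcoef q i (a + b) = Dcoef q i a * Dcoef q i b := by
  unfold Dcoef
  rw [← Finset.prod_mul_distrib]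
  refine Finset.prod_congr rfl fun m _ => ?_
  split_ifs with h
  · rw [Pi.add_apply, pow_add]
  · rw [mul_one]

theorem Dcoef_single (i j : Fin n) (t : ℕ) :
    Dcoef q i (Pi.single j t) = if j < i then q i j ^ t else 1 := by
  unfold Dcoef
  rw [Finset.prod_eq_single j]
  · rw [Pi.single_eq_same]
  · intro m _ hm
    rw [Pi.single_eq_of_ne hm]
    split_ifs <;> simp
  · simp

/-- the action of `xᵢ` on the vector space `(Fin n → ℕ) →₀ k` -/
def Trep (i : Fin n) : ((Fin n → ℕ) →₀ k) →ₗ[k] ((Fin n → ℕ) →₀ k) :=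
  Finsupp.lsum k fun a => Dcoef q i a • Finsupp.lsingle (a + Pi.single i 1)

theorem Trep_single (i : Fin n) (a : Fin n → ℕ) (x : k) :
    Trep q i (Finsupp.single a x)
      = Dcoef q i a • Finsupp.single (a + Pi.single i 1) x := by
  unfold Trep
  rw [Finsupp.lsum_single]
  rfl

theorem Trep_rel (hq1 : ∀ i, q i i = 1) (hq2 : ∀ i j, i ≠ j → q i j * q j i = 1)
    (i j : Fin n) :
    Trep q i ∘ₗ Trep q j = q i j • (Trep q j ∘ₗ Trep q i) := by
  refine Finsupp.lhom_ext fun a x => ?_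
  rw [LinearMap.comp_apply, LinearMap.smul_apply, LinearMap.comp_apply,
    Trep_single, map_smul, Trep_single, Trep_single, map_smul, Trep_single]
  rw [smul_smul, smul_smul, smul_smul]
  rw [show a + Pi.single j 1 + Pi.single i 1 = a + Pi.single i 1 + Pi.single j 1 by
    rw [add_assoc, add_assoc, add_comm (Pi.single j 1)]]
  congr 1
  rw [Dcoef_add, Dcoef_add, Dcoef_single, Dcoef_single]
  rcases lt_trichotomy i j with h | rfl | h
  · rw [if_neg (asymm h), if_pos h, mul_one, pow_one]
    linear_combination (-(Dcoef q i a * Dcoef q j a)) * hq2 i j (ne_of_lt h)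
  · simp only [if_neg (lt_irrefl i), hq1, mul_one, one_mul]
  · rw [if_pos h, if_neg (asymm h), mul_one, pow_one]
    ring
end QASAux3
namespace QASAux4
open QASAux QASAux2 QASAux3

variable {k : Type*} [Field k] {n ℓ : ℕ} (q : Fin n → Fin n → k)

/-- The standard representation of quantum affine space. -/
def rep (hq1 : ∀ i, q i i = 1) (hq2 : ∀ i j, i ≠ j → q i j * q j i = 1) :
    QAS k n q →ₐ[k] Module.End k ((Fin n → ℕ) →₀ k) := by
  with_unfolding_all exact RingQuot.liftAlgHom k ⟨FreeAlgebra.lift k (Trep q), by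
    rintro x y ⟨i, j, rfl, rfl⟩
    simp only [map_mul, map_smul, FreeAlgebra.lift_ι_apply]
    rw [Module.End.mul_eq_comp, Module.End.mul_eq_comp]
    exact Trep_rel q hq1 hq2 i j⟩

theorem rep_X (hq1 : ∀ i, q i i = 1) (hq2 : ∀ i j, i ≠ j → q i j * q j i = 1) (i : Fin n) :
    rep q hq1 hq2 (qasX k n q i) = Trep q i := by
  unfold rep qasX
  with_unfolding_all exact (RingQuot.liftAlgHom_mkAlgHom_apply k _ _ _).trans (FreeAlgebra.lift_ι_apply _ _)

theorem Dcoef_eq_one (i : Fin n) (a : Fin n → ℕ) (h : ∀ m, m < i → a m = 0) :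
    Dcoef q i a = 1 := by
  unfold Dcoef
  refine Finset.prod_eq_one fun m _ => ?_
  split_ifs with hm
  · rw [h m hm, pow_zero]
  · rfl

theorem Trep_pow (i : Fin n) (t : ℕ) (b : Fin n → ℕ) (x : k) :
    (Trep q i ^ t) (Finsupp.single b x)
      = (Dcoef q i b ^ t) • Finsupp.single (b + Pi.single i t) x := by
  induction t with
  | zero => simp
  | succ t ih =>
    rw [pow_succ', Module.End.mul_apply, ih, map_smul, Trep_single, smul_smul,
      Dcoef_add, Dcoef_single, if_neg (lt_irrefl i), mul_one, ← pow_succ,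
      add_assoc, ← Pi.single_add]

theorem list_Trep (L : List (Fin n)) (hL : L.Pairwise (· < ·)) (a b : Fin n → ℕ) (x : k)
    (hb : ∀ m, b m ≠ 0 → ∀ i ∈ L, i < m) :
    ((L.map fun i => Trep q i ^ a i).prod) (Finsupp.single b x)
      = Finsupp.single (b + fun m => if m ∈ L then a m else 0) x := by
  induction L with
  | nil =>
    have h0 : (b + fun m => if m ∈ ([] : List (Fin n)) then a m else 0) = b := by
      funext m; simp
    rw [List.map_nil, List.prod_nil, Module.End.one_apply, h0]
  | cons i₀ L ih =>
    rw [List.pairwise_cons] at hL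
    obtain ⟨hlt, hL'⟩ := hL
    simp only [List.map_cons, List.prod_cons, Module.End.mul_apply]
    rw [ih hL' (fun m hm i hi => hb m hm i (List.mem_cons_of_mem _ hi)), Trep_pow]
    have hD : Dcoef q i₀ (b + fun m => if m ∈ L then a m else 0) = 1 := by
      refine Dcoef_eq_one q i₀ _ fun m hm => ?_
      have hbm : b m = 0 := by
        by_contra h
        exact absurd (lt_trans (hb m h i₀ List.mem_cons_self) hm) (lt_irrefl _)
      have haux : (if m ∈ L then a m else 0) = 0 := by
        rw [if_neg]
        intro hmem
        exact absurd (lt_trans hm (hlt m hmem)) (lt_irrefl _)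
      rw [Pi.add_apply, hbm, haux]
    rw [hD, one_pow, one_smul]
    congr 1
    funext m
    rcases eq_or_ne m i₀ with rfl | hm
    · have : m ∉ L := fun h => absurd (hlt m h) (lt_irrefl _)
      simp [this, List.mem_cons]
    · rw [Pi.add_apply, Pi.add_apply, Pi.add_apply, Pi.single_eq_of_ne hm, add_zero]
      congr 1
      by_cases hmem : m ∈ L
      · rw [if_pos hmem, if_pos (List.mem_cons_of_mem _ hmem)]
      · rw [if_neg hmem, if_neg (by
          intro h
          rcases List.mem_cons.mp h with h' | h'
          exacts [hm h', hmem h'])]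

theorem rep_monomial (hq1 : ∀ i, q i i = 1) (hq2 : ∀ i j, i ≠ j → q i j * q j i = 1)
    (a : Fin n → ℕ) :
    rep q hq1 hq2 (qasMonomial k n q a) (Finsupp.single 0 1)
      = Finsupp.single a (1 : k) := by
  have h1 : rep q hq1 hq2 (qasMonomial k n q a)
      = ((List.finRange n).map fun i => Trep q i ^ a i).prod := by
    rw [qasMonomial, map_list_prod, List.map_map]
    refine congrArg List.prod (List.map_congr_left fun i _ => ?_)
    simp only [Function.comp_apply, map_pow, rep_X]
  rw [h1, list_Trep q _ (List.pairwise_lt_finRange n) a 0 1 (fun m hm => absurd rfl hm)]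
  congr 1
  funext m
  rw [Pi.add_apply, Pi.zero_apply, zero_add, if_pos (List.mem_finRange m)]

theorem monomial_linearIndependent (hq1 : ∀ i, q i i = 1)
    (hq2 : ∀ i j, i ≠ j → q i j * q j i = 1) :
    LinearIndependent k (qasMonomial k n q) := by
  let E : QAS k n q →ₗ[k] ((Fin n → ℕ) →₀ k) :=
    { toFun := fun z => rep q hq1 hq2 z (Finsupp.single 0 1)
      map_add' := fun x y => by simp [map_add]
      map_smul' := fun c x => by simp [map_smul] }
  have hE : E ∘ qasMonomial k n q = fun a => Finsupp.single a (1 : k) := by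
    funext a
    exact rep_monomial q hq1 hq2 a
  have h1 : LinearIndependent k (fun a : Fin n → ℕ => Finsupp.single a (1 : k)) := by
    have := (Finsupp.basisSingleOne (R := k) (ι := Fin n → ℕ)).linearIndependent
    simpa using this
  refine LinearIndependent.of_comp E ?_
  rw [hE]
  exact h1

theorem qasMonomial_zero : qasMonomial k n q 0 = 1 := by
  refine List.prod_eq_one fun x hx => ?_
  rcases List.mem_map.mp hx with ⟨i, _, rfl⟩
  simp

theorem list_prod_eq_single {ι M₀ : Type*} [Monoid M₀] (L : List ι) (hL : L.Nodup)
    (g : ι → M₀) (i : ι) (hi : i ∈ L) (h : ∀ m ∈ L, m ≠ i → g m = 1) :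
    (L.map g).prod = g i := by
  induction L with
  | nil => simp at hi
  | cons j T ih =>
    rw [List.nodup_cons] at hL
    rw [List.map_cons, List.prod_cons]
    rcases List.mem_cons.mp hi with rfl | hi'
    · rw [List.prod_eq_one, mul_one]
      intro x hx
      rcases List.mem_map.mp hx with ⟨m, hm, rfl⟩
      exact h m (List.mem_cons_of_mem _ hm) (fun he => hL.1 (he ▸ hm))
    · rw [h j List.mem_cons_self (fun he => hL.1 (he ▸ hi')), one_mul]
      exact ih hL.2 hi' (fun m hm hne => h m (List.mem_cons_of_mem _ hm) hne)

theorem qasMonomial_single (i : Fin n) (t : ℕ) :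
    qasMonomial k n q (Pi.single i t) = qasX k n q i ^ t := by
  rw [qasMonomial, list_prod_eq_single _ (List.nodup_finRange n) _ i (List.mem_finRange i)]
  · rw [Pi.single_eq_same]
  · intro m _ hm
    rw [Pi.single_eq_of_ne hm, pow_zero]

theorem monomial_span :
    Submodule.span k (Set.range (qasMonomial k n q)) = ⊤ := by
  refine le_antisymm le_top ?_
  have hadj : Algebra.adjoin k (Set.range (qasX k n q)) = ⊤ := by
    rw [show Set.range (qasX k n q)
        = ⇑(RingQuot.mkAlgHom k (QASRel k n q)) '' Set.range (FreeAlgebra.ι k) from by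
      rw [← Set.range_comp]; rfl]
    have hma := AlgHom.map_adjoin (RingQuot.mkAlgHom k (QASRel k n q))
      (Set.range (FreeAlgebra.ι k))
    have hmt : Subalgebra.map (RingQuot.mkAlgHom k (QASRel k n q))
        (Algebra.adjoin k (Set.range (FreeAlgebra.ι k))) = ⊤ := by
      rw [FreeAlgebra.adjoin_range_ι, Algebra.map_top]
      exact (AlgHom.range_eq_top _).mpr (RingQuot.mkAlgHom_surjective k _)
    with_unfolding_all exact hma.symm.trans hmt
  have h1 : (⊤ : Submodule k (QAS k n q))
      = Subalgebra.toSubmodule (Algebra.adjoin k (Set.range (qasX k n q))) := by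
    rw [hadj]; rfl
  rw [h1, Algebra.adjoin_eq_span]
  refine Submodule.span_le.mpr ?_
  intro x hx
  have hSM : x ∈ {y : QAS k n q | ∃ c : k, ∃ a, y = c • qasMonomial k n q a} := by
    refine Submonoid.closure_induction ?_ ⟨1, 0, by rw [qasMonomial_zero, one_smul]⟩ ?_ hx
    · rintro y ⟨i, rfl⟩
      exact ⟨1, Pi.single i 1, by rw [qasMonomial_single, pow_one, one_smul]⟩
    · rintro y z _ _ ⟨c, a, rfl⟩ ⟨c', a', rfl⟩
      refine ⟨c * (c' * ccoef q a a'), a + a', ?_⟩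
      rw [smul_mul_assoc, mul_smul_comm, qasMonomial_mul, smul_smul, smul_smul, mul_assoc]
  obtain ⟨c, a, rfl⟩ := hSM
  exact Submodule.smul_mem _ c (Submodule.subset_span ⟨a, rfl⟩)

/-- The `k`-basis of monomials of quantum affine space. -/
def bk (hq1 : ∀ i, q i i = 1) (hq2 : ∀ i j, i ≠ j → q i j * q j i = 1) :
    Module.Basis (Fin n → ℕ) k (QAS k n q) :=
  Module.Basis.mk (monomial_linearIndependent q hq1 hq2) (by rw [monomial_span])

theorem bk_apply (hq1 : ∀ i, q i i = 1) (hq2 : ∀ i j, i ≠ j → q i j * q j i = 1)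
    (a : Fin n → ℕ) : bk q hq1 hq2 a = qasMonomial k n q a :=
  Module.Basis.mk_apply _ _ _

end QASAux4
namespace QASAux5
open QASAux QASAux2 QASAux3 QASAux4

variable {k : Type*} [Field k] {n ℓ : ℕ} (q : Fin n → Fin n → k)

theorem zMon_mul (hq3 : ∀ i j, q i j ^ ℓ = 1) (m m' : Fin n → ℕ) :
    qasMonomial k n q (ℓ • m) * qasMonomial k n q (ℓ • m')
      = qasMonomial k n q (ℓ • (m + m')) := by
  rw [qasMonomial_mul, ccoef_smul_left q hq3, one_smul, ← smul_add]

theorem zMon_mem (m : Fin n → ℕ) : qasMonomial k n q (ℓ • m) ∈ qasCentre k n ℓ q := by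
  rw [qasMonomial]
  refine Subalgebra.list_prod_mem _ fun x hx => ?_
  rcases List.mem_map.mp hx with ⟨i, _, rfl⟩
  have : qasX k n q i ^ (ℓ • m) i = (qasX k n q i ^ ℓ) ^ m i := by
    rw [← pow_mul]; rfl
  rw [this]
  exact pow_mem (show qasX k n q i ^ ℓ ∈ qasCentre k n ℓ q from
    Algebra.subset_adjoin ⟨i, rfl⟩) _

theorem centre_eq_span (hq3 : ∀ i j, q i j ^ ℓ = 1) :
    Subalgebra.toSubmodule (qasCentre k n ℓ q)
      = Submodule.span k (Set.range fun m : Fin n → ℕ => qasMonomial k n q (ℓ • m)) := by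
  refine le_antisymm ?_ ?_
  · rw [qasCentre, Algebra.adjoin_eq_span]
    refine Submodule.span_le.mpr fun x hx => ?_
    have hx' : x ∈ {y : QAS k n q | ∃ m, y = qasMonomial k n q (ℓ • m)} := by
      refine Submonoid.closure_induction ?_ ?_ ?_ hx
      · rintro y ⟨i, rfl⟩
        refine ⟨Pi.single i 1, ?_⟩
        have : ℓ • Pi.single i (1 : ℕ) = (Pi.single i ℓ : Fin n → ℕ) := by
          funext m
          rcases eq_or_ne m i with rfl | hm
          · simp
          · simp [Pi.single_eq_of_ne hm]
        rw [this, qasMonomial_single]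
      · exact ⟨0, by rw [smul_zero, qasMonomial_zero]⟩
      · rintro y z _ _ ⟨m, rfl⟩ ⟨m', rfl⟩
        exact ⟨m + m', (zMon_mul q hq3 m m')⟩
    obtain ⟨m, rfl⟩ := hx'
    exact Submodule.subset_span ⟨m, rfl⟩
  · refine Submodule.span_le.mpr ?_
    rintro x ⟨m, rfl⟩
    exact zMon_mem q m

theorem mem_centre_iff (hq3 : ∀ i j, q i j ^ ℓ = 1) (z : QAS k n q) :
    z ∈ qasCentre k n ℓ q
      ↔ z ∈ Submodule.span k (Set.range fun m : Fin n → ℕ => qasMonomial k n q (ℓ • m)) := by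
  rw [← centre_eq_span q hq3]; rfl

theorem centre_comm (hq3 : ∀ i j, q i j ^ ℓ = 1) {z : QAS k n q}
    (hz : z ∈ qasCentre k n ℓ q) (x : QAS k n q) : z * x = x * z := by
  rw [mem_centre_iff q hq3] at hz
  induction hz using Submodule.span_induction with
  | mem z hzm =>
    obtain ⟨m, rfl⟩ := hzm
    have hx : x ∈ Submodule.span k (Set.range (qasMonomial k n q)) := by
      rw [monomial_span]; exact Submodule.mem_top
    induction hx using Submodule.span_induction with
    | mem y hy =>
      obtain ⟨a, rfl⟩ := hy
      rw [qasMonomial_mul, qasMonomial_mul, ccoef_smul_left q hq3,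
        ccoef_smul_right q hq3, add_comm]
    | zero => rw [mul_zero, zero_mul]
    | add u v _ _ hu hv => rw [mul_add, add_mul, hu, hv]
    | smul c u _ hu => rw [mul_smul_comm, smul_mul_assoc, hu]
  | zero => rw [zero_mul, mul_zero]
  | add u v _ _ hu hv => rw [add_mul, mul_add, hu, hv]
  | smul c u _ hu => rw [smul_mul_assoc, mul_smul_comm, hu]

theorem monomial_decomp (hq3 : ∀ i j, q i j ^ ℓ = 1) (hℓ : 0 < ℓ) (a : Fin n → ℕ) :
    qasMonomial k n q a
      = qasMonomial k n q (ℓ • fun i => a i / ℓ) * qasMonomial k n q (fun i => a i % ℓ) := by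
  rw [qasMonomial_mul, ccoef_smul_left q hq3, one_smul]
  congr 1
  funext i
  simp only [Pi.add_apply, Pi.smul_apply, smul_eq_mul]
  exact (Nat.div_add_mod (a i) ℓ).symm

theorem centre_coeff_vanish (hq1 : ∀ i, q i i = 1)
    (hq2 : ∀ i j, i ≠ j → q i j * q j i = 1) (hq3 : ∀ i j, q i j ^ ℓ = 1)
    {z : QAS k n q} (hz : z ∈ qasCentre k n ℓ q) (B : Fin n → ℕ)
    (hB : ¬ ∀ i, ℓ ∣ B i) : (bk q hq1 hq2).repr z B = 0 := by
  rw [mem_centre_iff q hq3] at hz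
  induction hz using Submodule.span_induction with
  | mem z hzm =>
    obtain ⟨m, rfl⟩ := hzm
    simp only [← bk_apply q hq1 hq2, Module.Basis.repr_self, Finsupp.single_apply]
    rw [if_neg]
    rintro rfl
    exact hB fun i => ⟨m i, rfl⟩
  | zero => simp
  | add u v _ _ hu hv => rw [map_add, Finsupp.add_apply, hu, hv, add_zero]
  | smul c u _ hu => rw [map_smul, Finsupp.smul_apply, hu, smul_zero]

/-- coefficient of a product with a monomial on the right, matching index -/
theorem coeff_mul_monomial (hq1 : ∀ i, q i i = 1)
    (hq2 : ∀ i j, i ≠ j → q i j * q j i = 1) (x : QAS k n q) (r a : Fin n → ℕ) :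
    (bk q hq1 hq2).repr (x * qasMonomial k n q r) (a + r)
      = ccoef q a r * (bk q hq1 hq2).repr x a := by
  set bk' := bk q hq1 hq2
  have h := congrFun (congrArg DFunLike.coe (bk'.ext
    (f₁ := (Finsupp.lapply (a + r) : ((Fin n → ℕ) →₀ k) →ₗ[k] k) ∘ₗ
      (bk'.repr : QAS k n q →ₗ[k] ((Fin n → ℕ) →₀ k)) ∘ₗ LinearMap.mulRight k (qasMonomial k n q r))
    (f₂ := ccoef q a r • ((Finsupp.lapply a : ((Fin n → ℕ) →₀ k) →ₗ[k] k) ∘ₗ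
      (bk'.repr : QAS k n q →ₗ[k] ((Fin n → ℕ) →₀ k))))
    (fun a' => ?_))) x
  · simpa using h
  · simp only [LinearMap.comp_apply, LinearMap.coe_mk, LinearMap.mulRight_apply,
      LinearMap.smul_apply, Finsupp.lapply_apply, LinearEquiv.coe_coe, smul_eq_mul]
    rw [bk_apply, qasMonomial_mul, map_smul, ← bk_apply q hq1 hq2 (a' + r),
      Module.Basis.repr_self, ← bk_apply q hq1 hq2 a', Module.Basis.repr_self,
      Finsupp.smul_apply, Finsupp.single_apply, Finsupp.single_apply]
    rcases eq_or_ne a' a with rfl | ha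
    · rw [if_pos rfl, if_pos rfl]
      simp
    · rw [if_neg (by rintro h'; exact ha (by
        funext i
        have := congrFun h' i
        simpa using Nat.add_right_cancel this)), if_neg ha]
      simp
end QASAux5
namespace QASAux6
open QASAux QASAux2 QASAux3 QASAux4 QASAux5

variable {k : Type*} [Field k] {n ℓ : ℕ} (q : Fin n → Fin n → k)

theorem coeff_monomial_mul (hq1 : ∀ i, q i i = 1)
    (hq2 : ∀ i j, i ≠ j → q i j * q j i = 1) (x : QAS k n q) (r a : Fin n → ℕ) :
    (bk q hq1 hq2).repr (qasMonomial k n q r * x) (r + a)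
      = ccoef q r a * (bk q hq1 hq2).repr x a := by
  set bk' := bk q hq1 hq2
  have h := congrFun (congrArg DFunLike.coe (bk'.ext
    (f₁ := (Finsupp.lapply (r + a) : ((Fin n → ℕ) →₀ k) →ₗ[k] k) ∘ₗ
      (bk'.repr : QAS k n q →ₗ[k] ((Fin n → ℕ) →₀ k)) ∘ₗ LinearMap.mulLeft k (qasMonomial k n q r))
    (f₂ := ccoef q r a • ((Finsupp.lapply a : ((Fin n → ℕ) →₀ k) →ₗ[k] k) ∘ₗ
      (bk'.repr : QAS k n q →ₗ[k] ((Fin n → ℕ) →₀ k))))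
    (fun a' => ?_))) x
  · simpa using h
  · simp only [LinearMap.comp_apply, LinearMap.mulLeft_apply, LinearMap.smul_apply,
      Finsupp.lapply_apply, LinearEquiv.coe_coe, smul_eq_mul]
    rw [bk_apply, qasMonomial_mul, map_smul, ← bk_apply q hq1 hq2 (r + a'),
      Module.Basis.repr_self, ← bk_apply q hq1 hq2 a', Module.Basis.repr_self,
      Finsupp.smul_apply, Finsupp.single_apply, Finsupp.single_apply]
    rcases eq_or_ne a' a with rfl | ha
    · rw [if_pos rfl, if_pos rfl]; simp
    · rw [if_neg (by
        rintro h'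
        exact ha (by
          funext i
          have := congrFun h' i
          simpa using Nat.add_left_cancel this)), if_neg ha]
      simp

theorem coeff_mul_monomial_ne (hq1 : ∀ i, q i i = 1)
    (hq2 : ∀ i j, i ≠ j → q i j * q j i = 1) (x : QAS k n q) (r B : Fin n → ℕ)
    (hB : ∀ a, a + r ≠ B) :
    (bk q hq1 hq2).repr (x * qasMonomial k n q r) B = 0 := by
  set bk' := bk q hq1 hq2
  have h := congrFun (congrArg DFunLike.coe (bk'.ext
    (f₁ := (Finsupp.lapply B : ((Fin n → ℕ) →₀ k) →ₗ[k] k) ∘ₗ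
      (bk'.repr : QAS k n q →ₗ[k] ((Fin n → ℕ) →₀ k)) ∘ₗ LinearMap.mulRight k (qasMonomial k n q r))
    (f₂ := 0)
    (fun a' => ?_))) x
  · simpa using h
  · simp only [LinearMap.comp_apply, LinearMap.mulRight_apply, LinearMap.zero_apply,
      Finsupp.lapply_apply, LinearEquiv.coe_coe]
    rw [bk_apply, qasMonomial_mul, map_smul, ← bk_apply q hq1 hq2 (a' + r),
      Module.Basis.repr_self, Finsupp.smul_apply, Finsupp.single_apply, if_neg (hB a'), smul_zero]

end QASAux6
namespace QASAux7
open QASAux QASAux2 QASAux3 QASAux4 QASAux5 QASAux6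

variable {k : Type*} [Field k] {n ℓ : ℕ} (q : Fin n → Fin n → k)

theorem centre_smul_def (z : qasCentre k n ℓ q) (x : QAS k n q) :
    z • x = (z : QAS k n q) * x := by
  rw [Subalgebra.smul_def, smul_eq_mul]

/-- the residue of an exponent vector -/
def res (hℓ : 0 < ℓ) (a : Fin n → ℕ) : Fin n → Fin ℓ := fun i => ⟨a i % ℓ, Nat.mod_lt _ hℓ⟩

/-- the restricted monomials -/
def vres : (Fin n → Fin ℓ) → QAS k n q := fun s => qasMonomial k n q fun i => (s i : ℕ)

theorem monomial_eq_smul (hq3 : ∀ i j, q i j ^ ℓ = 1) (hℓ : 0 < ℓ) (a : Fin n → ℕ) :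
    qasMonomial k n q a
      = (⟨qasMonomial k n q (ℓ • fun i => a i / ℓ), zMon_mem q _⟩ : qasCentre k n ℓ q)
        • vres q (res hℓ a) := by
  rw [centre_smul_def]
  exact monomial_decomp q hq3 hℓ a

theorem vres_span (hq3 : ∀ i j, q i j ^ ℓ = 1) (hℓ : 0 < ℓ) :
    ⊤ ≤ Submodule.span (qasCentre k n ℓ q) (Set.range (vres q (ℓ := ℓ))) := by
  intro x _
  have hx : x ∈ Submodule.span k (Set.range (qasMonomial k n q)) := by
    rw [monomial_span]; exact Submodule.mem_top
  have hle : Submodule.span k (Set.range (qasMonomial k n q))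
      ≤ (Submodule.span (qasCentre k n ℓ q) (Set.range (vres q (ℓ := ℓ)))).restrictScalars k := by
    refine Submodule.span_le.mpr ?_
    rintro _ ⟨a, rfl⟩
    rw [monomial_eq_smul q hq3 hℓ a]
    have hmem : vres q (res hℓ a)
        ∈ Submodule.span (qasCentre k n ℓ q) (Set.range (vres q (ℓ := ℓ))) :=
      Submodule.subset_span ⟨res hℓ a, rfl⟩
    exact Submodule.smul_mem _ _ hmem
  exact hle hx

theorem vres_li (hq1 : ∀ i, q i i = 1) (hq2 : ∀ i j, i ≠ j → q i j * q j i = 1)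
    (hq3 : ∀ i j, q i j ^ ℓ = 1) (hℓ : 0 < ℓ) :
    LinearIndependent (qasCentre k n ℓ q) (vres q (ℓ := ℓ)) := by
  rw [linearIndependent_iff]
  intro l hl
  ext s₀
  rw [Finsupp.zero_apply]
  have hval : ((l s₀ : QAS k n q)) = 0 := by
    set bk' := bk q hq1 hq2
    rw [← (LinearEquiv.map_eq_zero_iff bk'.repr)]
    ext B
    rw [Finsupp.zero_apply]
    by_cases hdvd : ∀ i, ℓ ∣ B i
    · -- B = ℓ • m
      set m : Fin n → ℕ := fun i => B i / ℓ with hm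
      have hBm : B = ℓ • m := by
        funext i
        rw [Pi.smul_apply, smul_eq_mul, hm, Nat.mul_div_cancel' (hdvd i)]
      -- apply the coefficient functional at ℓ•m + s₀ℕ to hl
      set φ : QAS k n q →ₗ[k] k :=
        (Finsupp.lapply ((ℓ • m) + fun i => ((s₀ i : ℕ))) : ((Fin n → ℕ) →₀ k) →ₗ[k] k) ∘ₗ
          (bk'.repr : QAS k n q →ₗ[k] ((Fin n → ℕ) →₀ k)) with hφ
      have h0 := congrArg φ hl
      rw [map_zero, Finsupp.linearCombination_apply, map_finsuppSum] at h0
      have hterm : ∀ s : Fin n → Fin ℓ, s ≠ s₀ → ∀ z : qasCentre k n ℓ q,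
          φ (z • vres q s) = 0 := by
        intro s hs z
        rw [hφ, LinearMap.comp_apply, Finsupp.lapply_apply, LinearEquiv.coe_coe,
          centre_smul_def,
          show vres q s = qasMonomial k n q (fun i => ((s i : ℕ))) from rfl]
        by_cases hex : ∃ a : Fin n → ℕ, (a + fun i => ((s i : ℕ)))
            = ((ℓ • m) + fun i => ((s₀ i : ℕ)))
        · obtain ⟨a, ha⟩ := hex
          rw [← ha, coeff_mul_monomial q hq1 hq2]
          have hna : ¬ ∀ i, ℓ ∣ a i := by
            obtain ⟨i, hi⟩ := Function.ne_iff.mp hs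
            intro hall
            obtain ⟨t, ht⟩ := hall i
            have hai := congrFun ha i
            simp only [Pi.add_apply, Pi.smul_apply, smul_eq_mul] at hai
            rw [ht] at hai
            have h1 : (ℓ * t + (s i : ℕ)) % ℓ = (ℓ * m i + (s₀ i : ℕ)) % ℓ := by rw [hai]
            rw [Nat.mul_add_mod, Nat.mul_add_mod, Nat.mod_eq_of_lt (s i).isLt,
              Nat.mod_eq_of_lt (s₀ i).isLt] at h1
            exact hi (Fin.ext h1)
          rw [centre_coeff_vanish q hq1 hq2 hq3 z.2 a hna, mul_zero]
        · push_neg at hex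
          exact coeff_mul_monomial_ne q hq1 hq2 _ _ _ hex
      rw [Finsupp.sum_eq_single s₀ (fun s _ hne => hterm s hne (l s))
        (by intro _; rw [zero_smul, map_zero])] at h0
      rw [hφ, LinearMap.comp_apply, Finsupp.lapply_apply, LinearEquiv.coe_coe,
        centre_smul_def,
        show vres q s₀ = qasMonomial k n q (fun i => ((s₀ i : ℕ))) from rfl,
        coeff_mul_monomial q hq1 hq2, ccoef_smul_left q hq3, one_mul] at h0
      rw [hBm]
      exact h0
    · exact centre_coeff_vanish q hq1 hq2 hq3 (l s₀).2 B hdvd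
  rw [ZeroMemClass.coe_zero]
  exact hval

set_option synthInstance.maxHeartbeats 1000000 in
set_option maxHeartbeats 2000000 in
/-- The basis of restricted monomials over the `ℓ`-centre. -/
def bZ (hq1 : ∀ i, q i i = 1) (hq2 : ∀ i j, i ≠ j → q i j * q j i = 1)
    (hq3 : ∀ i j, q i j ^ ℓ = 1) (hℓ : 0 < ℓ) :
    Module.Basis (Fin n → Fin ℓ) (qasCentre k n ℓ q) (QAS k n q) :=
  Module.Basis.mk (vres_li q hq1 hq2 hq3 hℓ) (vres_span q hq3 hℓ)

set_option synthInstance.maxHeartbeats 1000000 in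
set_option maxHeartbeats 2000000 in
theorem bZ_apply (hq1 : ∀ i, q i i = 1) (hq2 : ∀ i j, i ≠ j → q i j * q j i = 1)
    (hq3 : ∀ i j, q i j ^ ℓ = 1) (hℓ : 0 < ℓ) (s : Fin n → Fin ℓ) :
    bZ q hq1 hq2 hq3 hℓ s = qasMonomial k n q fun i => (s i : ℕ) :=
  Module.Basis.mk_apply _ _ _

set_option synthInstance.maxHeartbeats 1000000 in
set_option maxHeartbeats 2000000 in
theorem bZ_repr_monomial (hq1 : ∀ i, q i i = 1) (hq2 : ∀ i j, i ≠ j → q i j * q j i = 1)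
    (hq3 : ∀ i j, q i j ^ ℓ = 1) (hℓ : 0 < ℓ) (a : Fin n → ℕ) :
    (bZ q hq1 hq2 hq3 hℓ).repr (qasMonomial k n q a)
      = Finsupp.single (res hℓ a)
          (⟨qasMonomial k n q (ℓ • fun i => a i / ℓ), zMon_mem q _⟩ : qasCentre k n ℓ q) := by
  rw [monomial_eq_smul q hq3 hℓ a,
    show vres q (res hℓ a) = bZ q hq1 hq2 hq3 hℓ (res hℓ a) from
      (bZ_apply q hq1 hq2 hq3 hℓ _).symm,
    map_smul, Module.Basis.repr_self, Finsupp.smul_single, smul_eq_mul, mul_one]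

end QASAux7
namespace QASAux8
open QASAux QASAux2 QASAux3 QASAux4 QASAux5 QASAux6 QASAux7

variable {k : Type*} [Field k] {n ℓ : ℕ} (q : Fin n → Fin n → k)

/-- the top residue -/
def topF (hℓ : 0 < ℓ) : Fin n → Fin ℓ := fun _ => ⟨ℓ - 1, by omega⟩

theorem top_decomp_iff (hℓ : 0 < ℓ) (a m : Fin n → ℕ) :
    a = (ℓ • m + fun _ => (ℓ - 1))
      ↔ (res hℓ a = topF hℓ ∧ (ℓ • fun i => a i / ℓ) = ℓ • m) := by
  constructor
  · rintro rfl
    constructor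
    · funext i
      apply Fin.ext
      have hv : ((ℓ • m + fun _ => (ℓ - 1) : Fin n → ℕ) i) % ℓ = ℓ - 1 := by
        simp only [Pi.add_apply, Pi.smul_apply, smul_eq_mul]
        rw [Nat.mul_add_mod]
        exact Nat.mod_eq_of_lt (by omega)
      exact hv
    · funext i
      simp only [Pi.smul_apply, smul_eq_mul, Pi.add_apply]
      rw [Nat.mul_add_div hℓ, Nat.div_eq_of_lt (by omega), add_zero]
  · rintro ⟨h1, h2⟩
    funext i
    have hd := congrFun h2 i
    simp only [Pi.smul_apply, smul_eq_mul] at hd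
    have hr : a i % ℓ = ℓ - 1 := congrArg Fin.val (congrFun h1 i)
    have hdm := Nat.div_add_mod (a i) ℓ
    simp only [Pi.add_apply, Pi.smul_apply, smul_eq_mul]
    omega

set_option synthInstance.maxHeartbeats 1000000 in
set_option maxHeartbeats 2000000 in
theorem coord_top_monomial (hq1 : ∀ i, q i i = 1)
    (hq2 : ∀ i j, i ≠ j → q i j * q j i = 1) (hq3 : ∀ i j, q i j ^ ℓ = 1)
    (hℓ : 0 < ℓ) (a : Fin n → ℕ) :
    (((bZ q hq1 hq2 hq3 hℓ).coord (topF hℓ)) (qasMonomial k n q a) : QAS k n q)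
      = if res hℓ a = topF hℓ then qasMonomial k n q (ℓ • fun i => a i / ℓ) else 0 := by
  rw [Module.Basis.coord_apply, bZ_repr_monomial, Finsupp.single_apply]
  split_ifs with h
  · rfl
  · rfl

set_option synthInstance.maxHeartbeats 1000000 in
set_option maxHeartbeats 2000000 in
theorem coeff_coord_top (hq1 : ∀ i, q i i = 1)
    (hq2 : ∀ i j, i ≠ j → q i j * q j i = 1) (hq3 : ∀ i j, q i j ^ ℓ = 1)
    (hℓ : 0 < ℓ) (x : QAS k n q) (m : Fin n → ℕ) :
    (bk q hq1 hq2).repr (((bZ q hq1 hq2 hq3 hℓ).coord (topF hℓ)) x : QAS k n q) (ℓ • m)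
      = (bk q hq1 hq2).repr x (ℓ • m + fun _ => (ℓ - 1)) := by
  set bk' := bk q hq1 hq2
  set ΦL : QAS k n q →ₗ[k] QAS k n q :=
    (qasCentre k n ℓ q).val.toLinearMap ∘ₗ
      (((bZ q hq1 hq2 hq3 hℓ).coord (topF hℓ)).restrictScalars k) with hΦL
  have h := congrFun (congrArg DFunLike.coe (bk'.ext
    (f₁ := (Finsupp.lapply (ℓ • m) : ((Fin n → ℕ) →₀ k) →ₗ[k] k) ∘ₗ
      (bk'.repr : QAS k n q →ₗ[k] ((Fin n → ℕ) →₀ k)) ∘ₗ ΦL)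
    (f₂ := (Finsupp.lapply (ℓ • m + fun _ => (ℓ - 1)) : ((Fin n → ℕ) →₀ k) →ₗ[k] k) ∘ₗ
      (bk'.repr : QAS k n q →ₗ[k] ((Fin n → ℕ) →₀ k)))
    (fun a => ?_))) x
  · simpa [hΦL] using h
  · simp only [LinearMap.comp_apply, Finsupp.lapply_apply, LinearEquiv.coe_coe, hΦL,
      LinearMap.restrictScalars_apply, AlgHom.toLinearMap_apply, Subalgebra.coe_val]
    rw [bk_apply, coord_top_monomial q hq1 hq2 hq3 hℓ a, apply_ite (bk'.repr), map_zero]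
    by_cases h1 : res hℓ a = topF hℓ
    · rw [if_pos h1, ← bk_apply q hq1 hq2 (ℓ • fun i => a i / ℓ), Module.Basis.repr_self,
        ← bk_apply q hq1 hq2 a, Module.Basis.repr_self, Finsupp.single_apply, Finsupp.single_apply]
      by_cases h2 : (ℓ • fun i => a i / ℓ) = ℓ • m
      · rw [if_pos h2, if_pos ((top_decomp_iff hℓ a m).mpr ⟨h1, h2⟩)]
      · rw [if_neg h2, if_neg (fun hc => h2 ((top_decomp_iff hℓ a m).mp hc).2)]
    · rw [if_neg h1, ← bk_apply q hq1 hq2 a, Module.Basis.repr_self, Finsupp.zero_apply,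
        Finsupp.single_apply, if_neg (fun hc => h1 ((top_decomp_iff hℓ a m).mp hc).1)]

theorem qas_one_ne_zero (hq1 : ∀ i, q i i = 1)
    (hq2 : ∀ i j, i ≠ j → q i j * q j i = 1) : (1 : QAS k n q) ≠ 0 := by
  intro h
  have h1 : ((bk q hq1 hq2).repr (qasMonomial k n q 0)) 0 = 1 := by
    rw [← bk_apply q hq1 hq2, Module.Basis.repr_self, Finsupp.single_apply, if_pos rfl]
  rw [qasMonomial_zero, h] at h1
  simp only [map_zero, Finsupp.zero_apply] at h1
  exact one_ne_zero h1.symm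

set_option synthInstance.maxHeartbeats 1000000 in
set_option maxHeartbeats 2000000 in
theorem centre_mul_comm (hq3 : ∀ i j, q i j ^ ℓ = 1) (z w : qasCentre k n ℓ q) :
    z * w = w * z :=
  Subtype.ext (centre_comm q hq3 z.2 (↑w))

end QASAux8
namespace QASAux9
open QASAux QASAux2 QASAux3 QASAux4 QASAux5 QASAux6 QASAux7 QASAux8

variable {k : Type*} [Field k] {n ℓ : ℕ} (q : Fin n → Fin n → k)

set_option synthInstance.maxHeartbeats 1000000 in
set_option maxHeartbeats 4000000 in
theorem coord_top_monomial' (hq1 : ∀ i, q i i = 1)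
    (hq2 : ∀ i j, i ≠ j → q i j * q j i = 1) (hq3 : ∀ i j, q i j ^ ℓ = 1)
    (hℓ : 0 < ℓ) (a : Fin n → ℕ) :
    ((bZ q hq1 hq2 hq3 hℓ).coord (topF hℓ)) (qasMonomial k n q a)
      = if res hℓ a = topF hℓ then
          (⟨qasMonomial k n q (ℓ • fun i => a i / ℓ), zMon_mem q _⟩ : qasCentre k n ℓ q)
        else 0 := by
  rw [Module.Basis.coord_apply, bZ_repr_monomial, Finsupp.single_apply]

set_option synthInstance.maxHeartbeats 1000000 in
set_option maxHeartbeats 4000000 in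
theorem frobenius_part (hq1 : ∀ i, q i i = 1)
    (hq2 : ∀ i j, i ≠ j → q i j * q j i = 1) (hq3 : ∀ i j, q i j ^ ℓ = 1)
    (hℓ : 0 < ℓ) :
    IsFrobeniusForm (qasCentre k n ℓ q) ((bZ q hq1 hq2 hq3 hℓ).coord (topF hℓ)) := by
  set bk' := bk q hq1 hq2 with hbk'
  set Φ := (bZ q hq1 hq2 hq3 hℓ).coord (topF hℓ) with hΦdef
  refine ⟨?_, ?_, ?_⟩
  · -- left ideals
    intro I hI
    rw [eq_bot_iff]
    intro x hx
    rw [Submodule.mem_bot]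
    rw [← LinearEquiv.map_eq_zero_iff bk'.repr]
    ext a0
    rw [Finsupp.zero_apply]
    set b0 : Fin n → ℕ := fun i => (ℓ - 1) - a0 i % ℓ with hb0
    have hmem : qasMonomial k n q b0 * x ∈ I := I.mul_mem_left _ hx
    have hΦ : Φ (qasMonomial k n q b0 * x) = 0 := hI _ hmem
    have h6 := coeff_coord_top q hq1 hq2 hq3 hℓ (qasMonomial k n q b0 * x)
      (fun i => a0 i / ℓ)
    rw [← hΦdef, hΦ, ZeroMemClass.coe_zero, map_zero, Finsupp.zero_apply] at h6
    have hidx : (ℓ • (fun i => a0 i / ℓ) + fun _ => (ℓ - 1) : Fin n → ℕ) = b0 + a0 := by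
      funext i
      simp only [Pi.add_apply, Pi.smul_apply, smul_eq_mul, hb0]
      have h1 := Nat.div_add_mod (a0 i) ℓ
      have h2 := Nat.mod_lt (a0 i) hℓ
      omega
    rw [hidx, coeff_monomial_mul q hq1 hq2] at h6
    exact (mul_eq_zero.mp h6.symm).resolve_left (ccoef_ne_zero q hq1 hq2 b0 a0)
  · -- right ideals
    intro I hI
    rw [eq_bot_iff]
    intro x hx
    rw [Submodule.mem_bot]
    rw [← LinearEquiv.map_eq_zero_iff bk'.repr]
    ext a0
    rw [Finsupp.zero_apply]
    set b0 : Fin n → ℕ := fun i => (ℓ - 1) - a0 i % ℓ with hb0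
    have hmem : x * qasMonomial k n q b0 ∈ I :=
      I.smul_mem (MulOpposite.op (qasMonomial k n q b0)) hx
    have hΦ : Φ (x * qasMonomial k n q b0) = 0 := hI _ hmem
    have h6 := coeff_coord_top q hq1 hq2 hq3 hℓ (x * qasMonomial k n q b0)
      (fun i => a0 i / ℓ)
    rw [← hΦdef, hΦ, ZeroMemClass.coe_zero, map_zero, Finsupp.zero_apply] at h6
    have hidx : (ℓ • (fun i => a0 i / ℓ) + fun _ => (ℓ - 1) : Fin n → ℕ) = a0 + b0 := by
      funext i
      simp only [Pi.add_apply, Pi.smul_apply, smul_eq_mul, hb0]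
      have h1 := Nat.div_add_mod (a0 i) ℓ
      have h2 := Nat.mod_lt (a0 i) hℓ
      omega
    rw [hidx, coeff_mul_monomial q hq1 hq2] at h6
    exact (mul_eq_zero.mp h6.symm).resolve_left (ccoef_ne_zero q hq1 hq2 a0 b0)
  · -- surjectivity onto the dual
    intro f
    set topd : (Fin n → Fin ℓ) → (Fin n → ℕ) := fun s i => (ℓ - 1) - (s i : ℕ) with htopd
    set r : QAS k n q := ∑ s : Fin n → Fin ℓ,
      (ccoef q (topd s) (fun i => (s i : ℕ)))⁻¹ •
        ((f ((bZ q hq1 hq2 hq3 hℓ) s) : QAS k n q) * qasMonomial k n q (topd s)) with hr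
    refine ⟨r, ?_⟩
    have key : ∀ s' : Fin n → Fin ℓ, Φ (r * (bZ q hq1 hq2 hq3 hℓ) s') =
        f ((bZ q hq1 hq2 hq3 hℓ) s') := by
      intro s'
      rw [hr, Finset.sum_mul]
      have hterm : ∀ s : Fin n → Fin ℓ,
          ((ccoef q (topd s) (fun i => (s i : ℕ)))⁻¹ •
            ((f ((bZ q hq1 hq2 hq3 hℓ) s) : QAS k n q) * qasMonomial k n q (topd s)))
              * (bZ q hq1 hq2 hq3 hℓ) s'
          = ((ccoef q (topd s) (fun i => (s i : ℕ)))⁻¹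
              * ccoef q (topd s) (fun i => (s' i : ℕ))) •
            ((f ((bZ q hq1 hq2 hq3 hℓ) s) : QAS k n q)
              * qasMonomial k n q (topd s + fun i => (s' i : ℕ))) := by
        intro s
        rw [smul_mul_assoc, mul_assoc, bZ_apply q hq1 hq2 hq3 hℓ s', qasMonomial_mul,
          mul_smul_comm, smul_smul]
      simp only [hterm]
      rw [map_sum]
      rw [Finset.sum_eq_single s']
      · -- main term
        rw [LinearMap.map_smul_of_tower]
        have hres : res hℓ (topd s' + fun i => ((s' i : ℕ))) = topF hℓ := by
          funext i
          apply Fin.ext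
          have hv : ((topd s' + fun i => ((s' i : ℕ)) : Fin n → ℕ) i) % ℓ = ℓ - 1 := by
            simp only [Pi.add_apply, htopd]
            have := (s' i).isLt
            rw [Nat.mod_eq_of_lt (by omega)]
            omega
          exact hv
        have hΦm : Φ ((f ((bZ q hq1 hq2 hq3 hℓ) s') : QAS k n q)
            * qasMonomial k n q (topd s' + fun i => (s' i : ℕ)))
            = f ((bZ q hq1 hq2 hq3 hℓ) s') := by
          rw [show ((f ((bZ q hq1 hq2 hq3 hℓ) s') : QAS k n q)
              * qasMonomial k n q (topd s' + fun i => (s' i : ℕ)))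
            = (f ((bZ q hq1 hq2 hq3 hℓ) s'))
                • qasMonomial k n q (topd s' + fun i => (s' i : ℕ)) from
            (centre_smul_def _ _ _).symm]
          rw [map_smul, hΦdef, coord_top_monomial' q hq1 hq2 hq3 hℓ, if_pos hres]
          have hone : (⟨qasMonomial k n q
              (ℓ • fun i => ((topd s' + fun i => ((s' i : ℕ)) : Fin n → ℕ) i) / ℓ),
              zMon_mem q _⟩ : qasCentre k n ℓ q) = 1 := by
            apply Subtype.ext
            have hz : (ℓ • fun i => ((topd s' + fun i => ((s' i : ℕ)) : Fin n → ℕ) i) / ℓ)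
                = (0 : Fin n → ℕ) := by
              funext i
              simp only [Pi.smul_apply, smul_eq_mul, Pi.add_apply, Pi.zero_apply, htopd]
              have := (s' i).isLt
              rw [Nat.div_eq_of_lt (by omega)]
              exact mul_zero ℓ
            show qasMonomial k n q
                (ℓ • fun i => ((topd s' + fun i => ((s' i : ℕ)) : Fin n → ℕ) i) / ℓ)
              = ((1 : qasCentre k n ℓ q) : QAS k n q)
            rw [hz, qasMonomial_zero, OneMemClass.coe_one]
          rw [hone, smul_eq_mul, mul_one]
        rw [hΦm, inv_mul_cancel₀ (ccoef_ne_zero q hq1 hq2 _ _), one_smul]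
      · -- other terms vanish
        intro s _ hs
        rw [LinearMap.map_smul_of_tower]
        have hres : res hℓ (topd s + fun i => ((s' i : ℕ))) ≠ topF hℓ := by
          intro hc
          obtain ⟨i, hi⟩ := Function.ne_iff.mp hs
          have hv : ((topd s + fun i => ((s' i : ℕ)) : Fin n → ℕ) i) % ℓ = ℓ - 1 :=
            congrArg Fin.val (congrFun hc i)
          simp only [Pi.add_apply, htopd] at hv
          have h1 := (s i).isLt
          have h2 := (s' i).isLt
          have hne : (s i : ℕ) ≠ (s' i : ℕ) := fun h => hi (Fin.ext h)
          rcases lt_or_ge ((ℓ - 1) - (s i : ℕ) + (s' i : ℕ)) ℓ with h | h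
          · rw [Nat.mod_eq_of_lt h] at hv
            omega
          · rw [Nat.mod_eq_sub_mod h, Nat.mod_eq_of_lt (by omega)] at hv
            omega
        rw [show ((f ((bZ q hq1 hq2 hq3 hℓ) s) : QAS k n q)
            * qasMonomial k n q (topd s + fun i => (s' i : ℕ)))
          = (f ((bZ q hq1 hq2 hq3 hℓ) s))
              • qasMonomial k n q (topd s + fun i => (s' i : ℕ)) from
          (centre_smul_def _ _ _).symm]
        rw [map_smul, hΦdef, coord_top_monomial' q hq1 hq2 hq3 hℓ, if_neg hres,
          smul_zero, smul_zero]
      · intro hmem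
        exact absurd (Finset.mem_univ s') hmem
    -- conclude by centre-linearity
    set G : QAS k n q →ₗ[qasCentre k n ℓ q] qasCentre k n ℓ q :=
      { toFun := fun p => Φ (r * p)
        map_add' := fun p p' => by rw [mul_add, map_add]
        map_smul' := fun z p => by
          rw [RingHom.id_apply, centre_smul_def, ← mul_assoc,
            ← centre_comm q hq3 z.2 r, mul_assoc, ← centre_smul_def q, map_smul] } with hG
    have hfG : f = G := by
      refine Module.Basis.ext (bZ q hq1 hq2 hq3 hℓ) fun s => ?_
      rw [hG]
      exact (key s).symm
    intro p
    rw [hfG]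
    rfl

end QASAux9
namespace QASAux10
open QASAux QASAux2 QASAux3 QASAux4 QASAux5 QASAux6 QASAux7 QASAux8 QASAux9

variable {k : Type*} [Field k] {n ℓ : ℕ} (q : Fin n → Fin n → k)

theorem grading_eq_span (hq1 : ∀ i, q i i = 1) (hq2 : ∀ i j, i ≠ j → q i j * q j i = 1)
    {G : Type} [CommGroup G] [DecidableEq G] (d : Fin n → G) (g : G) :
    qasGrading k n q d g
      = Submodule.span k (⇑(bk q hq1 hq2) '' {a : Fin n → ℕ | (∏ i, d i ^ a i) = g}) := by
  unfold qasGrading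
  congr 1
  ext x
  constructor
  · rintro ⟨a, rfl, hdeg⟩
    exact ⟨a, hdeg, (bk_apply q hq1 hq2 a).symm ▸ rfl⟩
  · rintro ⟨a, hdeg, rfl⟩
    exact ⟨a, (bk_apply q hq1 hq2 a).symm ▸ rfl, hdeg⟩

theorem grading_internal (hq1 : ∀ i, q i i = 1)
    (hq2 : ∀ i j, i ≠ j → q i j * q j i = 1)
    {G : Type} [CommGroup G] [DecidableEq G] (d : Fin n → G) :
    DirectSum.IsInternal (qasGrading k n q d) := by
  rw [DirectSum.isInternal_submodule_iff_iSupIndep_and_iSup_eq_top]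
  constructor
  · intro g
    rw [Submodule.disjoint_def]
    intro x hxg hxo
    have h1 : ↑((bk q hq1 hq2).repr x).support ⊆ {a : Fin n → ℕ | (∏ i, d i ^ a i) = g} :=
      Module.Basis.repr_support_subset_of_mem_span _ _ (by rw [← grading_eq_span]; exact hxg)
    have h2 : ↑((bk q hq1 hq2).repr x).support
        ⊆ {a : Fin n → ℕ | (∏ i, d i ^ a i) ≠ g} := by
      refine Module.Basis.repr_support_subset_of_mem_span _ _ ?_
      have hle : (⨆ g', ⨆ (_ : g' ≠ g), qasGrading k n q d g')
          ≤ Submodule.span k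
            (⇑(bk q hq1 hq2) '' {a : Fin n → ℕ | (∏ i, d i ^ a i) ≠ g}) := by
        refine iSup₂_le fun g' hne => ?_
        rw [grading_eq_span q hq1 hq2]
        refine Submodule.span_mono (Set.image_mono ?_)
        intro a ha
        rw [Set.mem_setOf_eq] at ha ⊢
        rw [ha]
        exact hne
      exact hle hxo
    have hsupp : ((bk q hq1 hq2).repr x).support = ∅ := by
      rw [Finset.eq_empty_iff_forall_notMem]
      intro a ha
      exact (h2 ha) (h1 ha)
    have : (bk q hq1 hq2).repr x = 0 := Finsupp.support_eq_empty.mp hsupp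
    exact (LinearEquiv.map_eq_zero_iff _).mp this
  · rw [eq_top_iff]
    refine le_trans (le_of_eq (monomial_span q).symm) (Submodule.span_le.mpr ?_)
    rintro _ ⟨a, rfl⟩
    exact Submodule.mem_iSup_of_mem (∏ i, d i ^ a i)
      (Submodule.subset_span ⟨a, rfl, rfl⟩)

set_option synthInstance.maxHeartbeats 1000000 in
set_option maxHeartbeats 4000000 in
theorem grading_coord (hq1 : ∀ i, q i i = 1)
    (hq2 : ∀ i j, i ≠ j → q i j * q j i = 1) (hq3 : ∀ i j, q i j ^ ℓ = 1) (hℓ : 0 < ℓ)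
    {G : Type} [CommGroup G] [DecidableEq G] (d : Fin n → G) (g : G) (x : QAS k n q)
    (hx : x ∈ qasGrading k n q d g) :
    ((((bZ q hq1 hq2 hq3 hℓ).coord (topF hℓ)) x : QAS k n q))
      ∈ qasGrading k n q d ((∏ i, d i ^ (ℓ - 1))⁻¹ * g) := by
  unfold qasGrading at hx
  induction hx using Submodule.span_induction with
  | mem y hy =>
    obtain ⟨a, rfl, hdeg⟩ := hy
    rw [coord_top_monomial' q hq1 hq2 hq3 hℓ, apply_ite (Subtype.val)]
    by_cases h1 : res hℓ a = topF hℓ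
    · rw [if_pos h1]
      refine Submodule.subset_span ⟨ℓ • fun i => a i / ℓ, rfl, ?_⟩
      have ha : ∀ i, a i = ℓ * (a i / ℓ) + (ℓ - 1) := by
        intro i
        have hr : a i % ℓ = ℓ - 1 := congrArg Fin.val (congrFun h1 i)
        have := Nat.div_add_mod (a i) ℓ
        omega
      have hg : g = (∏ i, d i ^ (ℓ * (a i / ℓ))) * ∏ i, d i ^ (ℓ - 1) := by
        rw [← hdeg, ← Finset.prod_mul_distrib]
        refine Finset.prod_congr rfl fun i _ => ?_
        rw [← pow_add, ← ha i]
      rw [hg, mul_comm (∏ i : Fin n, d i ^ (ℓ * (a i / ℓ))), inv_mul_cancel_left]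
      refine Finset.prod_congr rfl fun i _ => ?_
      rw [Pi.smul_apply, smul_eq_mul]
    · rw [if_neg h1, ZeroMemClass.coe_zero]
      exact Submodule.zero_mem _
  | zero =>
    rw [map_zero, ZeroMemClass.coe_zero]
    exact Submodule.zero_mem _
  | add u v _ _ hu hv =>
    rw [map_add, AddMemClass.coe_add]
    exact Submodule.add_mem _ hu hv
  | smul c u _ hu =>
    rw [LinearMap.map_smul_of_tower, SetLike.val_smul_of_tower]
    exact Submodule.smul_mem _ c hu

end QASAux10

end QASInstSec

/-- Quantum affine space at an `ℓ`-th root of unity is a free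
Frobenius extension of its `ℓ`-centre of rank `ℓⁿ`, with Frobenius form the projection
onto the top restricted monomial; and for every grading by an abelian group `G` with
`xᵢ` of degree `dᵢ` it is a free-graded Frobenius extension with homogeneous Frobenius
form of degree `(∏ dᵢ^{ℓ-1})⁻¹`. -/
theorem quantumAffineSpace_freeGradedFrobenius
    (hℓ : 0 < ℓ) (hn : 0 < n)
    (hq1 : ∀ i, q i i = 1)
    (hq2 : ∀ i j, i ≠ j → q i j * q j i = 1)
    (hq3 : ∀ i j, q i j ^ ℓ = 1) :
    ∃ b : Module.Basis (Fin n → Fin ℓ) (qasCentre k n ℓ q) (QAS k n q),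
      (∀ a : Fin n → Fin ℓ, b a = qasMonomial k n q fun i => (a i : ℕ)) ∧
      (Module.rank (qasCentre k n ℓ q) (QAS k n q) = ((ℓ ^ n : ℕ) : Cardinal)) ∧
      IsFrobeniusForm (qasCentre k n ℓ q)
        (b.coord fun _ => (⟨ℓ - 1, by omega⟩ : Fin ℓ)) ∧
      (∀ (G : Type) (_ : CommGroup G) (_ : DecidableEq G) (d : Fin n → G),
        DirectSum.IsInternal (qasGrading k n q d) ∧
        (∀ a : Fin n → Fin ℓ,
          b a ∈ qasGrading k n q d (∏ i, d i ^ (a i : ℕ))) ∧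
        (∀ (g : G) (x : QAS k n q), x ∈ qasGrading k n q d g →
          ((b.coord fun _ => (⟨ℓ - 1, by omega⟩ : Fin ℓ)) x : QAS k n q) ∈
            qasGrading k n q d ((∏ i, d i ^ (ℓ - 1))⁻¹ * g))) := by
  refine ⟨QASAux7.bZ q hq1 hq2 hq3 hℓ, fun a => QASAux7.bZ_apply q hq1 hq2 hq3 hℓ a,
    ?_, ?_, ?_⟩
  · -- rank
    letI : CommRing (qasCentre k n ℓ q) :=
      { (inferInstance : Ring (qasCentre k n ℓ q)) with
        mul_comm := QASAux8.centre_mul_comm q hq3 }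
    haveI : Nontrivial (qasCentre k n ℓ q) :=
      ⟨⟨1, 0, fun hc => QASAux8.qas_one_ne_zero q hq1 hq2 (congrArg Subtype.val hc)⟩⟩
    rw [rank_eq_card_basis (QASAux7.bZ q hq1 hq2 hq3 hℓ)]
    congr 1
    simp
  · set_option maxHeartbeats 1000000 in
    exact QASAux9.frobenius_part q hq1 hq2 hq3 hℓ
  · intro G instG instD d
    refine ⟨QASAux10.grading_internal q hq1 hq2 d, ?_, ?_⟩
    · intro a
      rw [QASAux7.bZ_apply q hq1 hq2 hq3 hℓ a]
      exact Submodule.subset_span ⟨fun i => (a i : ℕ), rfl, rfl⟩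
    · intro g x hx
      set_option maxHeartbeats 1000000 in
      exact QASAux10.grading_coord q hq1 hq2 hq3 hℓ d g x hx
end
end

section
/- Let R be a non-negatively G-filtered k-algebra, M a finite free-filtered R-module, and set gr R and gr M for the associated graded objects. Then: (1) Hom_{gr R}(gr M, gr R) is naturally G-graded, with component of degree g consisting of those morphisms sending (gr M)^h into (gr R)^{gh} for all h; and (2) there is an isomorphism of graded gr R-modules gr Hom_R(M,R) ≅ Hom_{gr R}(gr M, gr R), where Hom_R(M,R) carries the filtration Hom_R(M,R)_g := {φ : φ(M_h) ⊆ R_{gh} for all h ∈ G}. -/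
/-!
STATEMENT 15: Let `R` be a non-negatively `G`-filtered `k`-algebra and `M` a finite
free-filtered `R`-module. Then (1) `Hom_{gr R}(gr M, gr R)` is naturally `G`-graded,
with component of degree `g` consisting of the morphisms sending `(gr M)^h` into
`(gr R)^{gh}` for all `h`; and (2) `gr Hom_R(M,R) ≅ Hom_{gr R}(gr M, gr R)` as graded
`gr R`-modules, where `Hom_R(M,R)` carries the filtration
`Hom_R(M,R)_g = {φ : φ(M_h) ⊆ R_{gh} for all h}`.

The associated graded objects are specified by realisations `(A, 𝒜, σ)` of `gr R` and
`(N, 𝒩, τ)` of `gr M`; part (2) is expressed by degreewise symbol maps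
`Θ_g : Hom_R(M,R)_g → Hom_{gr R}(gr M, gr R)^g` which are compatible with `σ, τ`,
surjective, and have kernel `Σ_{h<g} Hom_R(M,R)_h` — i.e. they induce an isomorphism
of graded modules `gr Hom_R(M,R) ≅ Hom_{gr R}(gr M, gr R)`.
-/


set_option maxHeartbeats 1000000
set_option synthInstance.maxHeartbeats 400000

noncomputable section

variable {k G : Type*} [Field k] [CommGroup G] [LinearOrder G] [IsOrderedMonoid G]

/-- A `G`-filtration of a `k`-algebra. -/
structure IsAlgebraFiltration {R : Type*} [Ring R] [Algebra k R]
    (F : G → Submodule k R) : Prop where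
  mono : Monotone F
  kfinite : ∀ g, Module.Finite k (F g)
  discrete : ∃ g, F g = ⊥
  exhaustive : ∀ x : R, ∃ g, x ∈ F g
  proper : ∀ g, F g ≠ ⊤
  one_mem : (1 : R) ∈ F (1 : G)
  mul_mem : ∀ {g h : G} {a b : R}, a ∈ F g → b ∈ F h → a * b ∈ F (g * h)

/-- A compatible `G`-filtration of an `R`-module. -/
structure IsModuleFiltration' {R M : Type*} [Ring R] [Algebra k R]
    [AddCommGroup M] [Module R M] [Module k M] [IsScalarTower k R M]
    (F : G → Submodule k R) (FM : G → Submodule k M) : Prop where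
  mono : Monotone FM
  kfinite : ∀ g, Module.Finite k (FM g)
  discrete : ∃ g, FM g = ⊥
  exhaustive : ∀ x : M, ∃ g, x ∈ FM g
  proper : ∀ g, FM g ≠ ⊤
  smul_mem : ∀ {g h : G} {a : R} {x : M}, a ∈ F g → x ∈ FM h → a • x ∈ FM (g * h)

/-- A `G`-grading of a `k`-algebra. -/
structure IsAlgebraGrading {A : Type*} [Ring A] [Algebra k A]
    (𝒜 : G → Submodule k A) : Prop where
  internal : DirectSum.IsInternal 𝒜
  kfinite : ∀ g, Module.Finite k (𝒜 g)
  nonneg : ∀ g < (1 : G), 𝒜 g = ⊥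
  proper : ∀ g, 𝒜 g ≠ ⊤
  one_mem : (1 : A) ∈ 𝒜 (1 : G)
  mul_mem : ∀ {g h : G} {a b : A}, a ∈ 𝒜 g → b ∈ 𝒜 h → a * b ∈ 𝒜 (g * h)

/-- A compatible `G`-grading of a module over a `G`-graded algebra. -/
structure IsModuleGrading {A N : Type*} [Ring A] [Algebra k A]
    [AddCommGroup N] [Module A N] [Module k N] [IsScalarTower k A N]
    (𝒜 : G → Submodule k A) (𝒩 : G → Submodule k N) : Prop where
  internal : DirectSum.IsInternal 𝒩
  kfinite : ∀ g, Module.Finite k (𝒩 g)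
  proper : ∀ g, 𝒩 g ≠ ⊤
  smul_mem : ∀ {g h : G} {a : A} {x : N}, a ∈ 𝒜 g → x ∈ 𝒩 h → a • x ∈ 𝒩 (g * h)

/-- A realisation of `(A, 𝒜)` as the associated graded algebra of `(R, F)`. -/
structure GradedRealization {R : Type*} [Ring R] [Algebra k R]
    (F : G → Submodule k R)
    (A : Type*) [Ring A] [Algebra k A] (𝒜 : G → Submodule k A) where
  σ : ∀ g : G, F g →ₗ[k] A
  mem_piece : ∀ (g : G) (x : F g), σ g x ∈ 𝒜 g
  surj : ∀ g : G, ∀ a ∈ 𝒜 g, ∃ x : F g, σ g x = a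
  ker : ∀ (g : G) (x : F g), σ g x = 0 ↔ (x : R) ∈ ⨆ (h : G) (_ : h < g), F h
  map_one : ∀ h1 : (1 : R) ∈ F 1, σ 1 ⟨1, h1⟩ = 1
  map_mul : ∀ (g h : G) (x : F g) (y : F h) (hxy : (x : R) * (y : R) ∈ F (g * h)),
    σ (g * h) ⟨(x : R) * (y : R), hxy⟩ = σ g x * σ h y

/-- A realisation of `(N, 𝒩)` as the associated graded module of `(M, FM)`, over a
realisation `ρ` of the associated graded algebra of `(R, F)`. -/
structure GradedModuleRealization {R M : Type*} [Ring R] [Algebra k R]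
    [AddCommGroup M] [Module R M] [Module k M] [IsScalarTower k R M]
    (F : G → Submodule k R) (FM : G → Submodule k M)
    {A : Type*} [Ring A] [Algebra k A] {𝒜 : G → Submodule k A}
    (ρ : GradedRealization F A 𝒜)
    (N : Type*) [AddCommGroup N] [Module A N] [Module k N] [IsScalarTower k A N]
    (𝒩 : G → Submodule k N) where
  τ : ∀ g : G, FM g →ₗ[k] N
  mem_piece : ∀ (g : G) (x : FM g), τ g x ∈ 𝒩 g
  surj : ∀ g : G, ∀ a ∈ 𝒩 g, ∃ x : FM g, τ g x = a
  ker : ∀ (g : G) (x : FM g), τ g x = 0 ↔ (x : M) ∈ ⨆ (h : G) (_ : h < g), FM h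
  map_smul : ∀ (g h : G) (a : F g) (x : FM h) (hax : (a : R) • (x : M) ∈ FM (g * h)),
    τ (g * h) ⟨(a : R) • (x : M), hax⟩ = ρ.σ g a • τ h x

/-- Scalar multiplication by a fixed `m : M`, as a `k`-linear map `R → M`. -/
def smulBy {R M : Type*} [Ring R] [Algebra k R] [AddCommGroup M] [Module R M]
    [Module k M] [IsScalarTower k R M] (m : M) : R →ₗ[k] M where
  toFun r := r • m
  map_add' a b := add_smul a b m
  map_smul' c a := smul_assoc c a m

/-- `(b, d)` is a free-filtered basis of `(M, FM)`. -/
def IsFreeFilteredBasis {R M : Type*} [Ring R] [Algebra k R] [AddCommGroup M]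
    [Module R M] [Module k M] [IsScalarTower k R M]
    (F : G → Submodule k R) (FM : G → Submodule k M)
    {n : ℕ} (b : Module.Basis (Fin n) R M) (d : Fin n → G) : Prop :=
  ∀ g : G, FM g = ⨆ i, (F (g * (d i)⁻¹)).map (smulBy (b i))

/-- The natural filtration on `Hom_R(M,R)`. -/
def HomFilt {R M : Type*} [Ring R] [Algebra k R] [AddCommGroup M] [Module R M]
    [Module k M] [IsScalarTower k R M]
    (F : G → Submodule k R) (FM : G → Submodule k M) (g : G) :
    Submodule k (M →ₗ[R] R) where
  carrier := {f | ∀ (h : G) (x : M), x ∈ FM h → f x ∈ F (g * h)}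
  add_mem' := fun h₁ h₂ h x hx => (F _).add_mem (h₁ h x hx) (h₂ h x hx)
  zero_mem' := fun h x hx => by simpa using (F _).zero_mem
  smul_mem' := fun c f hf h x hx => (F _).smul_mem c (hf h x hx)

/-- The natural grading on `Hom_{gr R}(gr M, gr R)`: the piece of degree `g` consists
of the maps sending `𝒩 h` into `𝒜 (g*h)` for all `h`. -/
def HomGr {A N : Type*} [Ring A] [Algebra k A] [AddCommGroup N] [Module A N]
    [Module k N] [IsScalarTower k A N]
    (𝒜 : G → Submodule k A) (𝒩 : G → Submodule k N) (g : G) :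
    Submodule k (N →ₗ[A] A) where
  carrier := {f | ∀ (h : G) (x : N), x ∈ 𝒩 h → f x ∈ 𝒜 (g * h)}
  add_mem' := fun h₁ h₂ h x hx => (𝒜 _).add_mem (h₁ h x hx) (h₂ h x hx)
  zero_mem' := fun h x hx => by simpa using (𝒜 _).zero_mem
  smul_mem' := fun c f hf h x hx => (𝒜 _).smul_mem c (hf h x hx)

section Aux

variable {R M A N : Type*} [Ring R] [Algebra k R]
    [AddCommGroup M] [Module R M] [Module k M] [IsScalarTower k R M]
    [Ring A] [Algebra k A]
    [AddCommGroup N] [Module A N] [Module k N] [IsScalarTower k A N]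
    {F : G → Submodule k R} {FM : G → Submodule k M}
    {n : ℕ} {b : Module.Basis (Fin n) R M} {d : Fin n → G}
    {𝒜 : G → Submodule k A} {𝒩 : G → Submodule k N}

theorem aux_sigma_cast (ρ : GradedRealization F A 𝒜) {g g' : G} (hgg' : g = g')
    {x : R} (hx : x ∈ F g) (hx' : x ∈ F g') : ρ.σ g ⟨x, hx⟩ = ρ.σ g' ⟨x, hx'⟩ := by
  subst hgg'; rfl

theorem aux_tau_cast {ρ : GradedRealization F A 𝒜}
    (μ : GradedModuleRealization F FM ρ N 𝒩) {g g' : G} (hgg' : g = g')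
    {x : M} (hx : x ∈ FM g) (hx' : x ∈ FM g') : μ.τ g ⟨x, hx⟩ = μ.τ g' ⟨x, hx'⟩ := by
  subst hgg'; rfl

theorem aux_mem_homFilt {g : G} {φ : M →ₗ[R] R} :
    φ ∈ HomFilt F FM g ↔ ∀ (h : G) (x : M), x ∈ FM h → φ x ∈ F (g * h) := Iff.rfl

theorem aux_mem_homGr {g : G} {ψ : N →ₗ[A] A} :
    ψ ∈ HomGr 𝒜 𝒩 g ↔ ∀ (h : G) (x : N), x ∈ 𝒩 h → ψ x ∈ 𝒜 (g * h) := Iff.rfl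

/-- The group identity `h * d⁻¹ * (g * d) = g * h`. -/
theorem aux_grp (h dd g : G) : h * dd⁻¹ * (g * dd) = g * h := by
  rw [mul_comm g dd, ← mul_assoc, mul_assoc h dd⁻¹ dd, inv_mul_cancel, mul_one, mul_comm]

theorem aux_nontrivial (hF : IsAlgebraFiltration (G := G) F) : Nontrivial G := by
  by_contra hG
  rw [not_nontrivial_iff_subsingleton] at hG
  apply hF.proper 1
  rw [Submodule.eq_top_iff']
  intro x
  obtain ⟨g, hg⟩ := hF.exhaustive x
  rwa [Subsingleton.elim (1 : G) g]

theorem aux_exists_lt [Nontrivial G] (g : G) : ∃ h : G, h < g := by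
  obtain ⟨a, ha⟩ := exists_ne (1 : G)
  rcases lt_or_gt_of_ne ha with h | h
  · exact ⟨a * g, by calc a * g < 1 * g := mul_lt_mul_left h g
                        _ = g := one_mul g⟩
  · exact ⟨a⁻¹ * g, by calc a⁻¹ * g < 1 * g := mul_lt_mul_left (inv_lt_one'.mpr h) g
                        _ = g := one_mul g⟩

/-- Membership in a sup over `h < g` of a monotone family is membership in one term. -/
theorem aux_mem_iSup_lt {X : Type*} [AddCommGroup X] [Module k X]
    {P : G → Submodule k X} (hmono : Monotone P) [Nontrivial G] {g : G} {x : X}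
    (hx : x ∈ ⨆ (h : G) (_ : h < g), P h) : ∃ h < g, x ∈ P h := by
  rw [iSup_subtype'] at hx
  have hne : Nonempty {h : G // h < g} := by
    obtain ⟨h, hh⟩ := aux_exists_lt (G := G) g; exact ⟨⟨h, hh⟩⟩
  have hdir : Directed (· ≤ ·) (fun h : {h : G // h < g} => P h.1) := by
    intro a c
    exact ⟨⟨max a.1 c.1, max_lt a.2 c.2⟩, hmono (le_max_left _ _), hmono (le_max_right _ _)⟩
  obtain ⟨⟨h, hh⟩, hxh⟩ := (Submodule.mem_iSup_of_directed _ hdir).mp hx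
  exact ⟨h, hh, hxh⟩

theorem aux_basis_mem (hF : IsAlgebraFiltration F) (hb : IsFreeFilteredBasis F FM b d)
    (i : Fin n) : b i ∈ FM (d i) := by
  rw [hb]
  have h1 : (1 : R) ∈ F (d i * (d i)⁻¹) := by rw [mul_inv_cancel]; exact hF.one_mem
  exact Submodule.mem_iSup_of_mem i (Submodule.mem_map.mpr ⟨1, h1, by simp [smulBy]⟩)

theorem aux_smul_mem_FM (hb : IsFreeFilteredBasis F FM b d) {g : G} {i : Fin n}
    {r : R} (hr : r ∈ F (g * (d i)⁻¹)) : r • b i ∈ FM g := by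
  rw [hb]; exact Submodule.mem_iSup_of_mem i (Submodule.mem_map.mpr ⟨r, hr, rfl⟩)

theorem aux_sum_mem_FM (hb : IsFreeFilteredBasis F FM b d) {g : G} {r : Fin n → R}
    (hr : ∀ i, r i ∈ F (g * (d i)⁻¹)) : (∑ i, r i • b i) ∈ FM g :=
  Submodule.sum_mem _ fun i _ => aux_smul_mem_FM hb (hr i)

theorem aux_exists_repr (hb : IsFreeFilteredBasis F FM b d) {g : G} {x : M}
    (hx : x ∈ FM g) : ∃ r : Fin n → R, (∀ i, r i ∈ F (g * (d i)⁻¹)) ∧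
      x = ∑ i, r i • b i := by
  classical
  rw [hb, Submodule.mem_iSup_iff_exists_finsupp] at hx
  obtain ⟨f, hf, hsum⟩ := hx
  choose r hr hrb using fun i => hf i
  refine ⟨r, hr, ?_⟩
  rw [← hsum, Finsupp.sum_fintype _ _ (fun i => rfl)]
  exact Finset.sum_congr rfl fun i _ => (hrb i).symm

theorem aux_repr_unique (b : Module.Basis (Fin n) R M) {r s : Fin n → R}
    (h : ∑ i, r i • b i = ∑ i, s i • b i) : r = s := by
  funext i
  have h0 : ∑ j, (r j - s j) • b j = 0 := by
    simp only [sub_smul, Finset.sum_sub_distrib, h, sub_self]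
  have := Fintype.linearIndependent_iff.mp b.linearIndependent _ h0 i
  exact sub_eq_zero.mp this

end Aux
section Aux2

variable {R M A N : Type*} [Ring R] [Algebra k R]
    [AddCommGroup M] [Module R M] [Module k M] [IsScalarTower k R M]
    [Ring A] [Algebra k A]
    [AddCommGroup N] [Module A N] [Module k N] [IsScalarTower k A N]
    {F : G → Submodule k R} {FM : G → Submodule k M}
    {n : ℕ} {b : Module.Basis (Fin n) R M} {d : Fin n → G}
    {𝒜 : G → Submodule k A} {𝒩 : G → Submodule k N}

/-- A linear map on a submodule applied to a sum of elements of the submodule. -/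
theorem aux_map_subtype_sum {X Y : Type*} [AddCommGroup X] [Module k X]
    [AddCommGroup Y] [Module k Y] (p : Submodule k X) (f : p →ₗ[k] Y)
    {m : ℕ} (c : Fin m → X) (hc : ∀ i, c i ∈ p) (hs : (∑ i, c i) ∈ p) :
    f ⟨∑ i, c i, hs⟩ = ∑ i, f ⟨c i, hc i⟩ := by
  have h : (⟨∑ i, c i, hs⟩ : p) = ∑ i, (⟨c i, hc i⟩ : p) := by
    apply Subtype.ext; simp
  rw [h, map_sum]

/-- The symbols of the basis vectors. -/
def eVec (hF : IsAlgebraFiltration F) (hb : IsFreeFilteredBasis F FM b d)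
    {ρ : GradedRealization F A 𝒜} (μ : GradedModuleRealization F FM ρ N 𝒩)
    (i : Fin n) : N :=
  μ.τ (d i) ⟨b i, aux_basis_mem hF hb i⟩

theorem aux_eVec_mem (hF : IsAlgebraFiltration F) (hb : IsFreeFilteredBasis F FM b d)
    {ρ : GradedRealization F A 𝒜} (μ : GradedModuleRealization F FM ρ N 𝒩)
    (i : Fin n) : eVec hF hb μ i ∈ 𝒩 (d i) :=
  μ.mem_piece _ _

theorem aux_tau_sum (hF : IsAlgebraFiltration F) (hFM : IsModuleFiltration' F FM)
    (hb : IsFreeFilteredBasis F FM b d) {ρ : GradedRealization F A 𝒜}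
    (μ : GradedModuleRealization F FM ρ N 𝒩) {g : G} {r : Fin n → R}
    (hr : ∀ i, r i ∈ F (g * (d i)⁻¹)) (hmem : (∑ i, r i • b i) ∈ FM g) :
    μ.τ g ⟨∑ i, r i • b i, hmem⟩
      = ∑ i, ρ.σ (g * (d i)⁻¹) ⟨r i, hr i⟩ • eVec hF hb μ i := by
  rw [aux_map_subtype_sum (FM g) (μ.τ g) _ (fun i => aux_smul_mem_FM hb (hr i)) hmem]
  refine Finset.sum_congr rfl fun i _ => ?_
  have hgi : g = g * (d i)⁻¹ * d i := (inv_mul_cancel_right g (d i)).symm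
  have hax : r i • b i ∈ FM (g * (d i)⁻¹ * d i) :=
    hFM.smul_mem (hr i) (aux_basis_mem hF hb i)
  rw [aux_tau_cast μ hgi _ hax]
  exact μ.map_smul (g * (d i)⁻¹) (d i) ⟨r i, hr i⟩ ⟨b i, aux_basis_mem hF hb i⟩ hax

theorem aux_N_repr (hF : IsAlgebraFiltration F) (hFM : IsModuleFiltration' F FM)
    (hb : IsFreeFilteredBasis F FM b d) {ρ : GradedRealization F A 𝒜}
    (μ : GradedModuleRealization F FM ρ N 𝒩) {g : G} {y : N} (hy : y ∈ 𝒩 g) :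
    ∃ a : Fin n → A, (∀ i, a i ∈ 𝒜 (g * (d i)⁻¹)) ∧
      y = ∑ i, a i • eVec hF hb μ i := by
  obtain ⟨x, hx⟩ := μ.surj g y hy
  obtain ⟨r, hr, hre⟩ := aux_exists_repr hb x.2
  have hxe : x = ⟨∑ i, r i • b i, hre ▸ x.2⟩ := Subtype.ext hre
  refine ⟨fun i => ρ.σ (g * (d i)⁻¹) ⟨r i, hr i⟩, fun i => ρ.mem_piece _ _, ?_⟩
  rw [← hx, hxe, aux_tau_sum hF hFM hb μ hr]

theorem aux_decompose_coe_sum {X : Type*} [AddCommMonoid X] [Module k X]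
    {P : G → Submodule k X} [DirectSum.Decomposition P] {ι : Type*}
    (s : Finset ι) (v : ι → X) (c : G) :
    ((DirectSum.decompose P (∑ h ∈ s, v h) c : P c) : X)
      = ∑ h ∈ s, ((DirectSum.decompose P (v h) c : P c) : X) := by
  classical
  induction s using Finset.induction_on with
  | empty => simp
  | insert _ _ hnot ih =>
    rw [Finset.sum_insert hnot, Finset.sum_insert hnot, DirectSum.decompose_add,
      DirectSum.add_apply, Submodule.coe_add, ih]

theorem aux_sum_decompose_eq [DirectSum.Decomposition 𝒜] (a : A) (T : Finset G)
    (c : G) (hT : ∀ m : G, (DirectSum.decompose 𝒜 a m : A) ≠ 0 → m * c⁻¹ ∈ T) :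
    ∑ g ∈ T, (DirectSum.decompose 𝒜 a (g * c) : A) = a := by
  classical
  have hinj : ∀ x ∈ T, ∀ y ∈ T, x * c = y * c → x = y := fun x _ y _ h =>
    mul_right_cancel h
  have hsub : (DirectSum.decompose 𝒜 a).support ⊆ T.image (· * c) := by
    intro m hm
    rw [DFinsupp.mem_support_iff] at hm
    have hm' : (DirectSum.decompose 𝒜 a m : A) ≠ 0 := fun h => hm (Subtype.ext h)
    exact Finset.mem_image.mpr ⟨m * c⁻¹, hT m hm', inv_mul_cancel_right m c⟩
  have hzero : ∀ m ∈ T.image (· * c), m ∉ (DirectSum.decompose 𝒜 a).support →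
      (DirectSum.decompose 𝒜 a m : A) = 0 := by
    intro m _ hm
    rw [DFinsupp.notMem_support_iff] at hm
    rw [hm]; rfl
  calc ∑ g ∈ T, (DirectSum.decompose 𝒜 a (g * c) : A)
      = ∑ m ∈ T.image (· * c), (DirectSum.decompose 𝒜 a m : A) :=
        (Finset.sum_image (f := fun m => (DirectSum.decompose 𝒜 a m : A)) hinj).symm
    _ = ∑ m ∈ (DirectSum.decompose 𝒜 a).support, (DirectSum.decompose 𝒜 a m : A) :=
        (Finset.sum_subset hsub hzero).symm
    _ = a := DirectSum.sum_support_decompose 𝒜 a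

end Aux2
section Aux3

variable {R M A N : Type*} [Ring R] [Algebra k R]
    [AddCommGroup M] [Module R M] [Module k M] [IsScalarTower k R M]
    [Ring A] [Algebra k A]
    [AddCommGroup N] [Module A N] [Module k N] [IsScalarTower k A N]
    {F : G → Submodule k R} {FM : G → Submodule k M}
    {n : ℕ} {b : Module.Basis (Fin n) R M} {d : Fin n → G}
    {𝒜 : G → Submodule k A} {𝒩 : G → Submodule k N}

/-- Homogeneous independence of the symbols of the basis vectors. -/
theorem aux_indep_hom (hF : IsAlgebraFiltration F) (hFM : IsModuleFiltration' F FM)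
    (hb : IsFreeFilteredBasis F FM b d) {ρ : GradedRealization F A 𝒜}
    (μ : GradedModuleRealization F FM ρ N 𝒩) [Nontrivial G] {g : G} {r : Fin n → R}
    (hr : ∀ i, r i ∈ F (g * (d i)⁻¹))
    (h0 : ∑ i, ρ.σ (g * (d i)⁻¹) ⟨r i, hr i⟩ • eVec hF hb μ i = 0) :
    ∀ i, ρ.σ (g * (d i)⁻¹) ⟨r i, hr i⟩ = 0 := by
  have hmem := aux_sum_mem_FM hb hr
  have h1 : μ.τ g ⟨∑ i, r i • b i, hmem⟩ = 0 := by
    rw [aux_tau_sum hF hFM hb μ hr hmem]; exact h0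
  rw [μ.ker] at h1
  obtain ⟨h, hhg, hmemh⟩ := aux_mem_iSup_lt hFM.mono h1
  obtain ⟨s, hs, hse⟩ := aux_exists_repr hb hmemh
  have hrs : r = s := aux_repr_unique b hse
  intro i
  rw [ρ.ker]
  refine Submodule.mem_iSup_of_mem (h * (d i)⁻¹) ?_
  exact Submodule.mem_iSup_of_mem (mul_lt_mul_left hhg (d i)⁻¹) (hrs ▸ hs i)

/-- The symbols of the basis vectors are `A`-linearly independent. -/
theorem aux_linindep (hF : IsAlgebraFiltration F) (hFM : IsModuleFiltration' F FM)
    (hb : IsFreeFilteredBasis F FM b d) (h𝒜 : IsAlgebraGrading 𝒜)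
    (h𝒩 : IsModuleGrading 𝒜 𝒩) {ρ : GradedRealization F A 𝒜}
    (μ : GradedModuleRealization F FM ρ N 𝒩) :
    LinearIndependent A (eVec hF hb μ) := by
  classical
  letI : DirectSum.Decomposition 𝒜 := h𝒜.internal.chooseDecomposition
  letI : DirectSum.Decomposition 𝒩 := h𝒩.internal.chooseDecomposition
  haveI : Nontrivial G := aux_nontrivial hF
  rw [Fintype.linearIndependent_iff]
  intro a h0 i0
  suffices hcomp : ∀ (g₀ : G) (i : Fin n),
      (DirectSum.decompose 𝒜 (a i) (g₀ * (d i)⁻¹) : A) = 0 by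
    rw [← DirectSum.sum_support_decompose 𝒜 (a i0)]
    refine Finset.sum_eq_zero fun m _ => ?_
    have h := hcomp (m * d i0) i0
    rwa [mul_inv_cancel_right] at h
  intro g₀ i
  set T : Finset G :=
    Finset.univ.biUnion (fun j => (DirectSum.decompose 𝒜 (a j)).support.image (· * d j))
    with hTdef
  have hTmem : ∀ (j : Fin n) (m : G), (DirectSum.decompose 𝒜 (a j) m : A) ≠ 0 →
      m * d j ∈ T := by
    intro j m hm
    refine Finset.mem_biUnion.mpr ⟨j, Finset.mem_univ j, Finset.mem_image.mpr ⟨m, ?_, rfl⟩⟩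
    rw [DFinsupp.mem_support_iff]
    exact fun h => hm (by rw [h]; rfl)
  by_cases hg₀ : g₀ ∈ T
  swap
  · -- if `g₀ ∉ T` the component vanishes trivially
    by_contra hne
    exact hg₀ (by simpa [inv_mul_cancel_right] using hTmem i (g₀ * (d i)⁻¹) hne)
  -- the homogeneous components of the relation
  set w : G → N := fun c =>
    ∑ j, (DirectSum.decompose 𝒜 (a j) (c * (d j)⁻¹) : A) • eVec hF hb μ j with hwdef
  have hwmem : ∀ c, w c ∈ 𝒩 c := by
    intro c
    refine Submodule.sum_mem _ fun j _ => ?_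
    have h := h𝒩.smul_mem (SetLike.coe_mem (DirectSum.decompose 𝒜 (a j) (c * (d j)⁻¹)))
      (aux_eVec_mem hF hb μ j)
    rwa [inv_mul_cancel_right] at h
  have hsum : ∑ c ∈ T, w c = 0 := by
    rw [hwdef]
    rw [Finset.sum_comm]
    calc ∑ j, ∑ c ∈ T, (DirectSum.decompose 𝒜 (a j) (c * (d j)⁻¹) : A) • eVec hF hb μ j
        = ∑ j, (∑ c ∈ T, (DirectSum.decompose 𝒜 (a j) (c * (d j)⁻¹) : A)) • eVec hF hb μ j := by
          refine Finset.sum_congr rfl fun j _ => ?_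
          rw [Finset.sum_smul]
      _ = ∑ j, a j • eVec hF hb μ j := by
          refine Finset.sum_congr rfl fun j _ => ?_
          rw [aux_sum_decompose_eq (a j) T (d j)⁻¹ (fun m hm => by
            simpa [inv_inv] using hTmem j m hm)]
      _ = 0 := h0
  have hwg : w g₀ = 0 := by
    have hz : (0 : N) = ∑ c ∈ T, (DirectSum.decompose 𝒩 (w c) g₀ : N) := by
      rw [← aux_decompose_coe_sum T w g₀, hsum]
      simp
    rw [Finset.sum_eq_single g₀ (fun c _ hc => DirectSum.decompose_of_mem_ne 𝒩 (hwmem c) hc)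
      (fun h => absurd hg₀ h)] at hz
    rw [DirectSum.decompose_of_mem_same 𝒩 (hwmem g₀)] at hz
    exact hz.symm
  -- now apply homogeneous independence
  choose r hrσ using fun j =>
    ρ.surj (g₀ * (d j)⁻¹) (DirectSum.decompose 𝒜 (a j) (g₀ * (d j)⁻¹) : A)
      (SetLike.coe_mem _)
  have hr : ∀ j, (r j : R) ∈ F (g₀ * (d j)⁻¹) := fun j => (r j).2
  have h0' : ∑ j, ρ.σ (g₀ * (d j)⁻¹) ⟨(r j : R), hr j⟩ • eVec hF hb μ j = 0 := by
    rw [← hwg, hwdef]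
    refine Finset.sum_congr rfl fun j _ => ?_
    rw [show (⟨(r j : R), hr j⟩ : F (g₀ * (d j)⁻¹)) = r j from Subtype.ext rfl, hrσ j]
  have := aux_indep_hom hF hFM hb μ hr h0' i
  rw [show (⟨(r i : R), hr i⟩ : F (g₀ * (d i)⁻¹)) = r i from Subtype.ext rfl, hrσ i] at this
  exact this

end Aux3
section Aux4

variable {R M A N : Type*} [Ring R] [Algebra k R]
    [AddCommGroup M] [Module R M] [Module k M] [IsScalarTower k R M]
    [Ring A] [Algebra k A]
    [AddCommGroup N] [Module A N] [Module k N] [IsScalarTower k A N]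
    {F : G → Submodule k R} {FM : G → Submodule k M}
    {n : ℕ} {b : Module.Basis (Fin n) R M} {d : Fin n → G}
    {𝒜 : G → Submodule k A} {𝒩 : G → Submodule k N}

theorem aux_span (hF : IsAlgebraFiltration F) (hFM : IsModuleFiltration' F FM)
    (hb : IsFreeFilteredBasis F FM b d) (h𝒩 : IsModuleGrading 𝒜 𝒩)
    {ρ : GradedRealization F A 𝒜} (μ : GradedModuleRealization F FM ρ N 𝒩) :
    ⊤ ≤ Submodule.span A (Set.range (eVec hF hb μ)) := by
  intro y _
  have hy : y ∈ ⨆ g, 𝒩 g := by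
    rw [h𝒩.internal.submodule_iSup_eq_top]; trivial
  rw [Submodule.mem_iSup_iff_exists_finsupp] at hy
  obtain ⟨f, hf, rfl⟩ := hy
  refine Submodule.sum_mem _ fun g _ => ?_
  obtain ⟨a, _, hrepr⟩ := aux_N_repr hF hFM hb μ (hf g)
  rw [hrepr]
  exact Submodule.sum_mem _ fun i _ =>
    Submodule.smul_mem _ _ (Submodule.subset_span ⟨i, rfl⟩)

/-- The symbols of a free-filtered basis form an `A`-basis of `N`. -/
def auxBasis (hF : IsAlgebraFiltration F) (hFM : IsModuleFiltration' F FM)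
    (hb : IsFreeFilteredBasis F FM b d) (h𝒜 : IsAlgebraGrading 𝒜)
    (h𝒩 : IsModuleGrading 𝒜 𝒩) {ρ : GradedRealization F A 𝒜}
    (μ : GradedModuleRealization F FM ρ N 𝒩) : Module.Basis (Fin n) A N :=
  Module.Basis.mk (aux_linindep hF hFM hb h𝒜 h𝒩 μ) (aux_span hF hFM hb h𝒩 μ)

theorem auxBasis_apply (hF : IsAlgebraFiltration F) (hFM : IsModuleFiltration' F FM)
    (hb : IsFreeFilteredBasis F FM b d) (h𝒜 : IsAlgebraGrading 𝒜)
    (h𝒩 : IsModuleGrading 𝒜 𝒩) {ρ : GradedRealization F A 𝒜}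
    (μ : GradedModuleRealization F FM ρ N 𝒩) (i : Fin n) :
    auxBasis hF hFM hb h𝒜 h𝒩 μ i = eVec hF hb μ i :=
  Module.Basis.mk_apply _ _ _

theorem aux_mem_homGr_of (hF : IsAlgebraFiltration F) (hFM : IsModuleFiltration' F FM)
    (hb : IsFreeFilteredBasis F FM b d) (h𝒜 : IsAlgebraGrading 𝒜)
    {ρ : GradedRealization F A 𝒜} (μ : GradedModuleRealization F FM ρ N 𝒩)
    {g : G} {ψ : N →ₗ[A] A} (hψ : ∀ i, ψ (eVec hF hb μ i) ∈ 𝒜 (g * d i)) :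
    ψ ∈ HomGr 𝒜 𝒩 g := by
  rw [aux_mem_homGr]
  intro h x hx
  obtain ⟨a, ha, rfl⟩ := aux_N_repr hF hFM hb μ hx
  rw [map_sum]
  refine Submodule.sum_mem _ fun i _ => ?_
  rw [map_smul, smul_eq_mul]
  exact aux_grp h (d i) g ▸ h𝒜.mul_mem (ha i) (hψ i)

theorem aux_mem_homFilt_of (hF : IsAlgebraFiltration F)
    (hb : IsFreeFilteredBasis F FM b d) {g : G} {φ : M →ₗ[R] R}
    (hφ : ∀ i, φ (b i) ∈ F (g * d i)) : φ ∈ HomFilt F FM g := by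
  rw [aux_mem_homFilt]
  intro h x hx
  obtain ⟨r, hr, rfl⟩ := aux_exists_repr hb hx
  rw [map_sum]
  refine Submodule.sum_mem _ fun i _ => ?_
  rw [map_smul, smul_eq_mul]
  exact aux_grp h (d i) g ▸ hF.mul_mem (hr i) (hφ i)

/-- Part (1): internality of the `HomGr` grading. -/
theorem aux_homGr_internal (hF : IsAlgebraFiltration F) (hFM : IsModuleFiltration' F FM)
    (hb : IsFreeFilteredBasis F FM b d) (h𝒜 : IsAlgebraGrading 𝒜)
    (h𝒩 : IsModuleGrading 𝒜 𝒩) {ρ : GradedRealization F A 𝒜}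
    (μ : GradedModuleRealization F FM ρ N 𝒩) :
    DirectSum.IsInternal (HomGr 𝒜 𝒩) := by
  classical
  letI : DirectSum.Decomposition 𝒜 := h𝒜.internal.chooseDecomposition
  set e := eVec hF hb μ with he
  set bN := auxBasis hF hFM hb h𝒜 h𝒩 μ with hbN
  rw [DirectSum.isInternal_submodule_iff_iSupIndep_and_iSup_eq_top]
  constructor
  · rw [iSupIndep_def]
    intro g
    rw [Submodule.disjoint_def]
    intro ψ hψg hψrest
    rw [iSup_subtype', Submodule.mem_iSup_iff_exists_finsupp] at hψrest
    obtain ⟨v, hv, hvsum⟩ := hψrest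
    have hval : ∀ i, ψ (e i) = 0 := by
      intro i
      have h1 : ψ (e i) = ∑ h ∈ v.support, (v h) (e i) := by
        rw [← hvsum, Finsupp.sum, LinearMap.coe_sum, Finset.sum_apply]
      have h2 := congrArg (fun x => (DirectSum.decompose 𝒜 x (g * d i) : A)) h1
      simp only at h2
      rw [DirectSum.decompose_of_mem_same 𝒜
        (hψg (d i) (e i) (aux_eVec_mem hF hb μ i))] at h2
      rw [aux_decompose_coe_sum] at h2
      rw [Finset.sum_eq_zero (fun h _ => DirectSum.decompose_of_mem_ne 𝒜
        ((hv h) (d i) (e i) (aux_eVec_mem hF hb μ i))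
        (fun hc => h.2 (mul_right_cancel hc)))] at h2
      exact h2
    refine Module.Basis.ext bN fun i => ?_
    rw [hbN, auxBasis_apply, LinearMap.zero_apply]
    exact hval i
  · rw [eq_top_iff]
    intro f _
    set T : Finset G := Finset.univ.biUnion
      (fun i => (DirectSum.decompose 𝒜 (f (e i))).support.image (· * (d i)⁻¹)) with hT
    have hfeq : f = ∑ g ∈ T,
        bN.constr k (fun i => (DirectSum.decompose 𝒜 (f (e i)) (g * d i) : A)) := by
      refine Module.Basis.ext bN fun i => ?_
      rw [LinearMap.coe_sum, Finset.sum_apply]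
      have hvals : ∀ g ∈ T,
          (bN.constr k (fun j => (DirectSum.decompose 𝒜 (f (e j)) (g * d j) : A))) (bN i)
            = (DirectSum.decompose 𝒜 (f (e i)) (g * d i) : A) := fun g _ =>
        Module.Basis.constr_basis _ _ _ _
      rw [Finset.sum_congr rfl hvals]
      rw [aux_sum_decompose_eq (f (e i)) T (d i) (fun m hm => ?_)]
      · rw [hbN, auxBasis_apply]
      · refine Finset.mem_biUnion.mpr ⟨i, Finset.mem_univ i,
          Finset.mem_image.mpr ⟨m, ?_, rfl⟩⟩
        rw [DFinsupp.mem_support_iff]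
        exact fun h => hm (by rw [h]; rfl)
    rw [hfeq]
    refine Submodule.sum_mem _ fun g _ => Submodule.mem_iSup_of_mem g
      (aux_mem_homGr_of hF hFM hb h𝒜 μ fun i => ?_)
    rw [← auxBasis_apply hF hFM hb h𝒜 h𝒩 μ, ← hbN, Module.Basis.constr_basis]
    exact SetLike.coe_mem _

end Aux4
section Aux5

variable {R M A N : Type*} [Ring R] [Algebra k R]
    [AddCommGroup M] [Module R M] [Module k M] [IsScalarTower k R M]
    [Ring A] [Algebra k A]
    [AddCommGroup N] [Module A N] [Module k N] [IsScalarTower k A N]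
    {F : G → Submodule k R} {FM : G → Submodule k M}
    {n : ℕ} {b : Module.Basis (Fin n) R M} {d : Fin n → G}
    {𝒜 : G → Submodule k A} {𝒩 : G → Submodule k N}

/-- The vector of symbols of the values of `φ` on the basis. -/
def auxVals (hF : IsAlgebraFiltration F) (hb : IsFreeFilteredBasis F FM b d)
    (ρ : GradedRealization F A 𝒜) (g : G) :
    (HomFilt F FM g) →ₗ[k] (Fin n → A) where
  toFun φ := fun i => ρ.σ (g * d i)
    ⟨(φ : M →ₗ[R] R) (b i), φ.2 (d i) (b i) (aux_basis_mem hF hb i)⟩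
  map_add' φ ψ := by
    funext i
    simp only [Pi.add_apply]
    rw [← map_add]
    congr 1
  map_smul' c φ := by
    funext i
    simp only [Pi.smul_apply, RingHom.id_apply]
    rw [← map_smul]
    congr 1

/-- The degreewise symbol map `Θ_g`. -/
def auxTheta (hF : IsAlgebraFiltration F) (hFM : IsModuleFiltration' F FM)
    (hb : IsFreeFilteredBasis F FM b d) (h𝒜 : IsAlgebraGrading 𝒜)
    (h𝒩 : IsModuleGrading 𝒜 𝒩) {ρ : GradedRealization F A 𝒜}
    (μ : GradedModuleRealization F FM ρ N 𝒩) (g : G) :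
    (HomFilt F FM g) →ₗ[k] (N →ₗ[A] A) where
  toFun φ := (auxBasis hF hFM hb h𝒜 h𝒩 μ).constr k (auxVals hF hb ρ g φ)
  map_add' φ ψ := by rw [map_add, map_add]
  map_smul' c φ := by rw [map_smul, map_smul]; rfl

theorem auxTheta_apply_e (hF : IsAlgebraFiltration F) (hFM : IsModuleFiltration' F FM)
    (hb : IsFreeFilteredBasis F FM b d) (h𝒜 : IsAlgebraGrading 𝒜)
    (h𝒩 : IsModuleGrading 𝒜 𝒩) {ρ : GradedRealization F A 𝒜}
    (μ : GradedModuleRealization F FM ρ N 𝒩) (g : G) (φ : HomFilt F FM g) (i : Fin n) :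
    (auxTheta hF hFM hb h𝒜 h𝒩 μ g φ) (eVec hF hb μ i)
      = ρ.σ (g * d i) ⟨(φ : M →ₗ[R] R) (b i),
          φ.2 (d i) (b i) (aux_basis_mem hF hb i)⟩ := by
  rw [← auxBasis_apply hF hFM hb h𝒜 h𝒩 μ]
  exact Module.Basis.constr_basis (auxBasis hF hFM hb h𝒜 h𝒩 μ) k (auxVals hF hb ρ g φ) i

theorem auxTheta_mem (hF : IsAlgebraFiltration F) (hFM : IsModuleFiltration' F FM)
    (hb : IsFreeFilteredBasis F FM b d) (h𝒜 : IsAlgebraGrading 𝒜)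
    (h𝒩 : IsModuleGrading 𝒜 𝒩) {ρ : GradedRealization F A 𝒜}
    (μ : GradedModuleRealization F FM ρ N 𝒩) (g : G) (φ : HomFilt F FM g) :
    auxTheta hF hFM hb h𝒜 h𝒩 μ g φ ∈ HomGr 𝒜 𝒩 g := by
  refine aux_mem_homGr_of hF hFM hb h𝒜 μ fun i => ?_
  rw [auxTheta_apply_e]
  exact ρ.mem_piece _ _

theorem auxTheta_compat (hF : IsAlgebraFiltration F) (hFM : IsModuleFiltration' F FM)
    (hb : IsFreeFilteredBasis F FM b d) (h𝒜 : IsAlgebraGrading 𝒜)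
    (h𝒩 : IsModuleGrading 𝒜 𝒩) {ρ : GradedRealization F A 𝒜}
    (μ : GradedModuleRealization F FM ρ N 𝒩) (g : G) (φ : HomFilt F FM g)
    (h : G) (x : FM h) :
    (auxTheta hF hFM hb h𝒜 h𝒩 μ g φ) (μ.τ h x)
      = ρ.σ (g * h) ⟨(φ : M →ₗ[R] R) (x : M), φ.2 h (x : M) x.2⟩ := by
  obtain ⟨r, hr, hre⟩ := aux_exists_repr hb x.2
  have hφb : ∀ i, (φ : M →ₗ[R] R) (b i) ∈ F (g * d i) :=
    fun i => φ.2 (d i) (b i) (aux_basis_mem hF hb i)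
  have hprod : ∀ i, r i * (φ : M →ₗ[R] R) (b i) ∈ F (g * h) := fun i =>
    aux_grp h (d i) g ▸ hF.mul_mem (hr i) (hφb i)
  have hxe : x = ⟨∑ i, r i • b i, hre ▸ x.2⟩ := Subtype.ext hre
  have h1 : μ.τ h x = ∑ i, ρ.σ (h * (d i)⁻¹) ⟨r i, hr i⟩ • eVec hF hb μ i := by
    rw [hxe]
    exact aux_tau_sum hF hFM hb μ hr _
  have hval : (⟨(φ : M →ₗ[R] R) (x : M), φ.2 h (x : M) x.2⟩ : F (g * h))
      = ⟨∑ i, r i * (φ : M →ₗ[R] R) (b i),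
          Submodule.sum_mem _ fun i _ => hprod i⟩ := by
    apply Subtype.ext
    show (φ : M →ₗ[R] R) (x : M) = _
    rw [hre]
    simp only [map_sum, map_smul, smul_eq_mul]
  rw [h1, hval, aux_map_subtype_sum (F (g * h)) (ρ.σ (g * h)) _ hprod _]
  rw [map_sum]
  refine Finset.sum_congr rfl fun i _ => ?_
  rw [map_smul, smul_eq_mul, auxTheta_apply_e]
  rw [aux_sigma_cast ρ (aux_grp h (d i) g).symm (hprod i)
    (hF.mul_mem (hr i) (hφb i))]
  exact (ρ.map_mul (h * (d i)⁻¹) (g * d i) ⟨r i, hr i⟩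
    ⟨(φ : M →ₗ[R] R) (b i), hφb i⟩ _).symm

theorem auxTheta_surj (hF : IsAlgebraFiltration F) (hFM : IsModuleFiltration' F FM)
    (hb : IsFreeFilteredBasis F FM b d) (h𝒜 : IsAlgebraGrading 𝒜)
    (h𝒩 : IsModuleGrading 𝒜 𝒩) {ρ : GradedRealization F A 𝒜}
    (μ : GradedModuleRealization F FM ρ N 𝒩) (g : G) (ψ : N →ₗ[A] A)
    (hψ : ψ ∈ HomGr 𝒜 𝒩 g) :
    ∃ φ : HomFilt F FM g, auxTheta hF hFM hb h𝒜 h𝒩 μ g φ = ψ := by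
  have hv : ∀ i, ψ (eVec hF hb μ i) ∈ 𝒜 (g * d i) :=
    fun i => hψ (d i) _ (aux_eVec_mem hF hb μ i)
  choose r hrσ using fun i => ρ.surj (g * d i) (ψ (eVec hF hb μ i)) (hv i)
  set φ₀ : M →ₗ[R] R := b.constr k (fun i => (r i : R)) with hφ₀
  have hφb : ∀ i, φ₀ (b i) = (r i : R) := fun i => Module.Basis.constr_basis b k _ i
  have hφmem : φ₀ ∈ HomFilt F FM g :=
    aux_mem_homFilt_of hF hb fun i => hφb i ▸ (r i).2
  refine ⟨⟨φ₀, hφmem⟩, ?_⟩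
  refine Module.Basis.ext (auxBasis hF hFM hb h𝒜 h𝒩 μ) fun i => ?_
  rw [auxBasis_apply, auxTheta_apply_e]
  rw [aux_sigma_cast ρ rfl _ (hφb i ▸ (r i).2)]
  rw [show (⟨φ₀ (b i), hφb i ▸ (r i).2⟩ : F (g * d i)) = r i from Subtype.ext (hφb i)]
  exact hrσ i

theorem auxTheta_ker (hF : IsAlgebraFiltration F) (hFM : IsModuleFiltration' F FM)
    (hb : IsFreeFilteredBasis F FM b d) (h𝒜 : IsAlgebraGrading 𝒜)
    (h𝒩 : IsModuleGrading 𝒜 𝒩) {ρ : GradedRealization F A 𝒜}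
    (μ : GradedModuleRealization F FM ρ N 𝒩) (g : G) (φ : HomFilt F FM g) :
    auxTheta hF hFM hb h𝒜 h𝒩 μ g φ = 0 ↔
      (φ : M →ₗ[R] R) ∈ ⨆ (h : G) (_ : h < g), HomFilt F FM h := by
  haveI : Nontrivial G := aux_nontrivial hF
  constructor
  · intro hθ
    have hσ : ∀ i, ρ.σ (g * d i) ⟨(φ : M →ₗ[R] R) (b i),
        φ.2 (d i) (b i) (aux_basis_mem hF hb i)⟩ = 0 := by
      intro i
      rw [← auxTheta_apply_e hF hFM hb h𝒜 h𝒩 μ g φ i, hθ]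
      rfl
    have hmem : ∀ i, ∃ c < g * d i, (φ : M →ₗ[R] R) (b i) ∈ F c := by
      intro i
      have h := (ρ.ker _ _).mp (hσ i)
      exact aux_mem_iSup_lt hF.mono h
    rcases Nat.eq_zero_or_pos n with hn | hn
    · -- `M = 0`
      subst hn
      have hφ0 : (φ : M →ₗ[R] R) = 0 := Module.Basis.ext b fun i => i.elim0
      rw [hφ0]
      exact Submodule.zero_mem _
    choose c hc hcmem using hmem
    haveI : Nonempty (Fin n) := ⟨⟨0, hn⟩⟩
    set h₀ : G := Finset.univ.sup' Finset.univ_nonempty (fun i => c i * (d i)⁻¹) with hh₀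
    have hlt : h₀ < g := by
      rw [hh₀, Finset.sup'_lt_iff]
      intro i _
      have := mul_lt_mul_left (hc i) (d i)⁻¹
      rwa [mul_inv_cancel_right] at this
    have hφmem : (φ : M →ₗ[R] R) ∈ HomFilt F FM h₀ := by
      refine aux_mem_homFilt_of hF hb fun i => ?_
      refine hF.mono ?_ (hcmem i)
      have hle : c i * (d i)⁻¹ ≤ h₀ :=
        Finset.le_sup' (fun j => c j * (d j)⁻¹) (Finset.mem_univ i)
      calc c i = c i * (d i)⁻¹ * d i := (inv_mul_cancel_right _ _).symm
        _ ≤ h₀ * d i := mul_le_mul_left hle (d i)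
    exact Submodule.mem_iSup_of_mem h₀ (Submodule.mem_iSup_of_mem hlt hφmem)
  · intro hmem
    -- evaluation at `b i` is `k`-linear
    have hval : ∀ i, (φ : M →ₗ[R] R) (b i) ∈ ⨆ (c : G) (_ : c < g * d i), F c := by
      intro i
      set ev : (M →ₗ[R] R) →ₗ[k] R :=
        { toFun := fun ψ => ψ (b i)
          map_add' := fun ψ₁ ψ₂ => rfl
          map_smul' := fun a ψ => rfl } with hev
      have hle : (⨆ (h : G) (_ : h < g), HomFilt F FM h) ≤
          Submodule.comap ev (⨆ (c : G) (_ : c < g * d i), F c) := by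
        refine iSup₂_le fun h hh => ?_
        intro ψ hψ
        refine Submodule.mem_comap.mpr ?_
        refine Submodule.mem_iSup_of_mem (h * d i)
          (Submodule.mem_iSup_of_mem (mul_lt_mul_left hh (d i)) ?_)
        exact hψ (d i) (b i) (aux_basis_mem hF hb i)
      exact hle hmem
    refine Module.Basis.ext (auxBasis hF hFM hb h𝒜 h𝒩 μ) fun i => ?_
    rw [auxBasis_apply, auxTheta_apply_e, LinearMap.zero_apply]
    exact (ρ.ker _ _).mpr (hval i)

end Aux5

/-- (1) The submodules `HomGr g` form a grading of
`Hom_{gr R}(gr M, gr R)`; (2) the natural degreewise symbol maps realise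
`gr Hom_R(M,R) ≅ Hom_{gr R}(gr M, gr R)` as graded modules. -/
theorem gr_hom_iso_hom_gr
    {R M A N : Type*} [Ring R] [Algebra k R]
    [AddCommGroup M] [Module R M] [Module k M] [IsScalarTower k R M]
    [Ring A] [Algebra k A]
    [AddCommGroup N] [Module A N] [Module k N] [IsScalarTower k A N]
    (F : G → Submodule k R) (hF : IsAlgebraFiltration F)
    (hnn : ∀ g < (1 : G), F g = ⊥)
    (FM : G → Submodule k M) (hFM : IsModuleFiltration' F FM)
    {n : ℕ} (b : Module.Basis (Fin n) R M) (d : Fin n → G)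
    (hb : IsFreeFilteredBasis F FM b d)
    (𝒜 : G → Submodule k A) (h𝒜 : IsAlgebraGrading 𝒜)
    (ρ : GradedRealization F A 𝒜)
    (𝒩 : G → Submodule k N) (h𝒩 : IsModuleGrading 𝒜 𝒩)
    (μ : GradedModuleRealization F FM ρ N 𝒩) :
    DirectSum.IsInternal (HomGr 𝒜 𝒩) ∧
    ∃ Θ : ∀ g : G, (HomFilt F FM g) →ₗ[k] (N →ₗ[A] A),
      (∀ (g : G) (φ : HomFilt F FM g), Θ g φ ∈ HomGr 𝒜 𝒩 g) ∧
      (∀ (g : G) (φ : HomFilt F FM g) (h : G) (x : FM h),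
        (Θ g φ) (μ.τ h x) = ρ.σ (g * h) ⟨(φ : M →ₗ[R] R) (x : M), φ.2 h (x : M) x.2⟩) ∧
      (∀ g : G, ∀ ψ ∈ HomGr 𝒜 𝒩 g, ∃ φ : HomFilt F FM g, Θ g φ = ψ) ∧
      (∀ (g : G) (φ : HomFilt F FM g),
        Θ g φ = 0 ↔ (φ : M →ₗ[R] R) ∈ ⨆ (h : G) (_ : h < g), HomFilt F FM h) := by
  refine ⟨aux_homGr_internal hF hFM hb h𝒜 h𝒩 μ,
    auxTheta hF hFM hb h𝒜 h𝒩 μ, auxTheta_mem hF hFM hb h𝒜 h𝒩 μ,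
    auxTheta_compat hF hFM hb h𝒜 h𝒩 μ, auxTheta_surj hF hFM hb h𝒜 h𝒩 μ,
    auxTheta_ker hF hFM hb h𝒜 h𝒩 μ⟩
end
end
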